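/- arXiv:1603.09009 — 10 statements merged into one kernel-verified Lean document; each statement's English description precedes it below -/
import Mathlib

section
/- Let l ≤ r be reals and C ⊆ ℝ^m a convex set such that for every subset S of {1,...,m} there exists x ∈ C with x_i ≥ l for all i ∈ S and x_i ≤ r for all i ∉ S. Then there exists a point x ∈ C with all coordinates in [l, r]. -/
/-- Let `l ≤ r` be reals and `C ⊆ ℝ^m` a convex set such that for every subset `S` of the
index set there exists `x ∈ C` with `x i ≥ l` for `i ∈ S` and `x i ≤ r` for `i ∉ S`.
Then there exists a point of `C` with all coordinates in `[l, r]`. -/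
theorem stmt0 {m : ℕ} (l r : ℝ) (hlr : l ≤ r) (C : Set (Fin m → ℝ)) (hC : Convex ℝ C)
    (h : ∀ S : Finset (Fin m), ∃ x ∈ C, (∀ i ∈ S, l ≤ x i) ∧ (∀ i ∉ S, x i ≤ r)) :
    ∃ x ∈ C, ∀ i, x i ∈ Set.Icc l r := by
  have key : ∀ k : ℕ, ∀ S T : Finset (Fin m), (S ∩ T).card ≤ k → S ∪ T = Finset.univ →
      ∃ x ∈ C, (∀ i ∈ S, l ≤ x i) ∧ (∀ i ∈ T, x i ≤ r) := by
    intro k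
    induction k with
    | zero =>
      intro S T hcard hun
      have hdisj : S ∩ T = ∅ := Finset.card_eq_zero.mp (Nat.le_zero.mp hcard)
      obtain ⟨x, hxC, hxl, hxr⟩ := h S
      refine ⟨x, hxC, hxl, fun i hi => hxr i ?_⟩
      intro hiS
      have : i ∈ S ∩ T := Finset.mem_inter.mpr ⟨hiS, hi⟩
      simp [hdisj] at this
    | succ k ih =>
      intro S T hcard hun
      rcases Nat.lt_or_ge (S ∩ T).card (k + 1) with hlt | hge
      · exact ih S T (Nat.lt_succ_iff.mp hlt) hun
      · have hcard' : (S ∩ T).card = k + 1 := le_antisymm hcard hge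
        have hne : (S ∩ T).Nonempty := Finset.card_pos.mp (by omega)
        obtain ⟨j, hj⟩ := hne
        have hjS : j ∈ S := (Finset.mem_inter.mp hj).1
        have hjT : j ∈ T := (Finset.mem_inter.mp hj).2
        -- x : good for (S, T.erase j)
        have hc1 : (S ∩ T.erase j).card ≤ k := by
          rw [Finset.inter_erase]
          have := Finset.card_erase_of_mem hj
          omega
        have hu1 : S ∪ T.erase j = Finset.univ := by
          apply Finset.eq_univ_iff_forall.mpr
          intro i
          by_cases hij : i = j
          · exact Finset.mem_union_left _ (hij ▸ hjS)
          · have := Finset.eq_univ_iff_forall.mp hun i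
            rcases Finset.mem_union.mp this with hi | hi
            · exact Finset.mem_union_left _ hi
            · exact Finset.mem_union_right _ (Finset.mem_erase.mpr ⟨hij, hi⟩)
        obtain ⟨x, hxC, hxl, hxr⟩ := ih S (T.erase j) hc1 hu1
        -- y : good for (S.erase j, T)
        have hc2 : (S.erase j ∩ T).card ≤ k := by
          rw [Finset.erase_inter]
          have := Finset.card_erase_of_mem hj
          omega
        have hu2 : S.erase j ∪ T = Finset.univ := by
          apply Finset.eq_univ_iff_forall.mpr
          intro i
          by_cases hij : i = j
          · exact Finset.mem_union_right _ (hij ▸ hjT)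
          · have := Finset.eq_univ_iff_forall.mp hun i
            rcases Finset.mem_union.mp this with hi | hi
            · exact Finset.mem_union_left _ (Finset.mem_erase.mpr ⟨hij, hi⟩)
            · exact Finset.mem_union_right _ hi
        obtain ⟨y, hyC, hyl, hyr⟩ := ih (S.erase j) T hc2 hu2
        by_cases hxj : x j ≤ r
        · refine ⟨x, hxC, hxl, fun i hi => ?_⟩
          by_cases hij : i = j
          · exact hij ▸ hxj
          · exact hxr i (Finset.mem_erase.mpr ⟨hij, hi⟩)
        · by_cases hyj : l ≤ y j
          · refine ⟨y, hyC, fun i hi => ?_, hyr⟩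
            by_cases hij : i = j
            · exact hij ▸ hyj
            · exact hyl i (Finset.mem_erase.mpr ⟨hij, hi⟩)
          · push_neg at hxj hyj
            have hxl' : l < x j := lt_of_le_of_lt hlr hxj
            have hden : 0 < x j - y j := by linarith
            set t : ℝ := (x j - l) / (x j - y j) with ht
            have ht0 : 0 ≤ t := div_nonneg (by linarith) hden.le
            have ht1 : t ≤ 1 := by
              rw [div_le_one hden]; linarith
            have ht1' : 0 ≤ 1 - t := by linarith
            refine ⟨t • y + (1 - t) • x, hC hyC hxC ht0 ht1' (by ring), ?_, ?_⟩
            · intro i hi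
              by_cases hij : i = j
              · subst hij
                have : t * y i + (1 - t) * x i = l := by
                  rw [ht]
                  field_simp
                  ring
                simp only [Pi.add_apply, Pi.smul_apply, smul_eq_mul]
                linarith
              · have hx : l ≤ x i := hxl i hi
                have hy : l ≤ y i := hyl i (Finset.mem_erase.mpr ⟨hij, hi⟩)
                have h1 := mul_le_mul_of_nonneg_left hy ht0
                have h2 := mul_le_mul_of_nonneg_left hx ht1'
                simp only [Pi.add_apply, Pi.smul_apply, smul_eq_mul]
                nlinarith
            · intro i hi
              by_cases hij : i = j
              · subst hij
                have : t * y i + (1 - t) * x i = l := by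
                  rw [ht]
                  field_simp
                  ring
                simp only [Pi.add_apply, Pi.smul_apply, smul_eq_mul]
                linarith
              · have hx : x i ≤ r := hxr i (Finset.mem_erase.mpr ⟨hij, hi⟩)
                have hy : y i ≤ r := hyr i hi
                have h1 := mul_le_mul_of_nonneg_left hy ht0
                have h2 := mul_le_mul_of_nonneg_left hx ht1'
                simp only [Pi.add_apply, Pi.smul_apply, smul_eq_mul]
                nlinarith
  obtain ⟨x, hxC, hl, hr⟩ := key m Finset.univ Finset.univ
    (by simp [Finset.card_univ]) (by simp)
  exact ⟨x, hxC, fun i => ⟨hl i (Finset.mem_univ i), hr i (Finset.mem_univ i)⟩⟩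
end

section
/- If a demand vector d can be routed in a strongly connected directed graph G with congestion c, then −d can be routed in G with congestion at most bal(G)·c. -/
set_option linter.unusedSectionVars false


open Finset

variable {V : Type*} [Fintype V] [DecidableEq V]

/-- Total weight of edges from `S` to its complement. -/
def cutWeight (w : V → V → ℝ) (S : Finset V) : ℝ :=
  ∑ u ∈ S, ∑ v ∈ Sᶜ, w u v

/-- `G` is strongly connected: every vertex reaches every other along edges of
positive weight. -/
def StronglyConnected (w : V → V → ℝ) : Prop :=
  ∀ u v : V, Relation.ReflTransGen (fun a b => 0 < w a b) u v

/-- The demand vector `b` can be routed with congestion `c`: there is a nonnegative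
flow `f` supported on the edges with `f ≤ c·w` entrywise, whose net divergence
(inflow minus outflow) at each vertex is `b`. -/
def Routes (w : V → V → ℝ) (b : V → ℝ) (c : ℝ) : Prop :=
  ∃ f : V → V → ℝ, (∀ u v, 0 ≤ f u v) ∧ (∀ u v, f u v ≤ c * w u v) ∧
    ∀ x : V, (∑ u, f u x) - (∑ u, f x u) = b x

/-- The imbalance `bal(G)`: the least nonnegative `α` such that for every cut `S`,
`w(S, V∖S) ≤ α · w(V∖S, S)`. -/
noncomputable def bal (w : V → V → ℝ) : ℝ :=
  sInf {α : ℝ | 0 ≤ α ∧ ∀ S : Finset V, cutWeight w S ≤ α * cutWeight w Sᶜ}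

/-! ### Auxiliary lemmas -/

lemma cutWeight_nonneg (w : V → V → ℝ) (hw : ∀ u v, 0 ≤ w u v) (S : Finset V) :
    0 ≤ cutWeight w S :=
  Finset.sum_nonneg fun u _ => Finset.sum_nonneg fun v _ => hw u v

lemma crossing_of_rtg {r : V → V → Prop} {S : Finset V} {u v : V}
    (h : Relation.ReflTransGen r u v) (hu : u ∉ S) :
    v ∈ S → ∃ x y, x ∉ S ∧ y ∈ S ∧ r x y := by
  induction h with
  | refl => exact fun hv => absurd hv hu
  | tail hab hbc ih =>
    rename_i b c
    intro hv
    by_cases hb : b ∈ S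
    · exact ih hb
    · exact ⟨b, c, hb, hv, hbc⟩

lemma cut_pos (w : V → V → ℝ) (hw : ∀ u v, 0 ≤ w u v) (hsc : StronglyConnected w)
    {S : Finset V} (h1 : S.Nonempty) (h2 : Sᶜ.Nonempty) : 0 < cutWeight w Sᶜ := by
  obtain ⟨v, hv⟩ := h1
  obtain ⟨u, hu⟩ := h2
  obtain ⟨x, y, hx, hy, hxy⟩ := crossing_of_rtg (hsc u v) (Finset.mem_compl.mp hu) hv
  have hEq : cutWeight w Sᶜ = ∑ a ∈ Sᶜ, ∑ b ∈ S, w a b := by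
    rw [cutWeight, compl_compl]
  rw [hEq]
  refine Finset.sum_pos' (fun a _ => Finset.sum_nonneg fun b _ => hw a b) ?_
  exact ⟨x, Finset.mem_compl.mpr hx,
    Finset.sum_pos' (fun b _ => hw x b) ⟨y, hy, hxy⟩⟩

lemma bal_spec (w : V → V → ℝ) (hw : ∀ u v, 0 ≤ w u v) (hsc : StronglyConnected w) :
    0 ≤ bal w ∧ ∀ S : Finset V, cutWeight w S ≤ bal w * cutWeight w Sᶜ := by
  have hmem : bal w ∈ {α : ℝ | 0 ≤ α ∧ ∀ S : Finset V,
      cutWeight w S ≤ α * cutWeight w Sᶜ} := by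
    apply IsClosed.csInf_mem
    · have hset : {α : ℝ | 0 ≤ α ∧ ∀ S : Finset V, cutWeight w S ≤ α * cutWeight w Sᶜ}
          = Set.Ici 0 ∩ ⋂ S : Finset V, {α : ℝ | cutWeight w S ≤ α * cutWeight w Sᶜ} := by
        ext α
        simp [Set.mem_iInter, Set.mem_Ici]
      rw [hset]
      exact isClosed_Ici.inter (isClosed_iInter fun S =>
        isClosed_le continuous_const (continuous_id.mul continuous_const))
    · -- nonempty
      set α₀ := Finset.univ.sup' ⟨(∅ : Finset V), Finset.mem_univ _⟩
        (fun S : Finset V => cutWeight w S / cutWeight w Sᶜ) with hα₀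
      have hz : cutWeight w (∅ : Finset V) = 0 := by simp [cutWeight]
      have h0 : (0 : ℝ) ≤ α₀ := by
        have hle := Finset.le_sup' (fun S : Finset V => cutWeight w S / cutWeight w Sᶜ)
          (Finset.mem_univ (∅ : Finset V))
        calc (0 : ℝ) = cutWeight w (∅ : Finset V) / cutWeight w (∅ : Finset V)ᶜ := by
              rw [hz, zero_div]
          _ ≤ α₀ := hle
      refine ⟨α₀, h0, fun S => ?_⟩
      by_cases hS : S.Nonempty
      · by_cases hSc : Sᶜ.Nonempty
        · have hp := cut_pos w hw hsc hS hSc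
          have hle := Finset.le_sup' (fun S : Finset V => cutWeight w S / cutWeight w Sᶜ)
            (Finset.mem_univ S)
          rw [div_le_iff₀ hp] at hle
          simpa [hα₀] using hle
        · have hSc' : Sᶜ = ∅ := Finset.not_nonempty_iff_eq_empty.mp hSc
          have : cutWeight w S = 0 := by simp [cutWeight, hSc']
          rw [this]
          exact mul_nonneg h0 (cutWeight_nonneg w hw _)
      · have hS' : S = ∅ := Finset.not_nonempty_iff_eq_empty.mp hS
        rw [hS', hz]
        exact mul_nonneg h0 (cutWeight_nonneg w hw _)
    · exact ⟨0, fun α hα => hα.1⟩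
  exact hmem

/-- The excess of a candidate flow `g` for routing `-d`. -/
noncomputable def excF (g : V → V → ℝ) (d : V → ℝ) (v : V) : ℝ :=
  (∑ u, g u v) - (∑ u, g v u) + d v

/-- Single-edge modification of a flow. -/
def pushF (g : V → V → ℝ) (p q : V) (ε : ℝ) : V → V → ℝ :=
  fun a b => g a b + if a = p ∧ b = q then ε else 0

lemma excF_pushF (g : V → V → ℝ) (d : V → ℝ) (p q : V) (ε : ℝ) (v : V) :
    excF (pushF g p q ε) d v
      = excF g d v + ((if v = q then ε else 0) - (if v = p then ε else 0)) := by
  unfold excF pushF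
  rw [Finset.sum_add_distrib, Finset.sum_add_distrib]
  have h1 : (∑ u, if u = p ∧ v = q then ε else 0) = if v = q then ε else 0 := by
    by_cases h : v = q <;> simp [h]
  have h2 : (∑ u, if v = p ∧ u = q then ε else 0) = if v = p then ε else 0 := by
    by_cases h : v = p <;> simp [h]
  rw [h1, h2]
  ring

lemma sum_abs_two (e : V → ℝ) {x y : V} (hxy : x ≠ y) (ε : ℝ) :
    (∑ v, |e v + ((if v = y then ε else 0) - (if v = x then ε else 0))|)
      = (∑ v, |e v|) - |e x| - |e y| + |e x - ε| + |e y + ε| := by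
  have key : ∀ F : V → ℝ,
      (∑ v, F v) = F x + (F y + ∑ v ∈ (Finset.univ.erase x).erase y, F v) := by
    intro F
    rw [← Finset.add_sum_erase _ F (Finset.mem_univ x),
      ← Finset.add_sum_erase _ F (Finset.mem_erase.mpr ⟨hxy.symm, Finset.mem_univ y⟩)]
  rw [key (fun v => |e v + ((if v = y then ε else 0) - (if v = x then ε else 0))|),
    key (fun v => |e v|)]
  have hx' : |e x + ((if x = y then ε else 0) - (if x = x then ε else 0))| = |e x - ε| := by
    simp [hxy]
    ring_nf
  have hy' : |e y + ((if y = y then ε else 0) - (if y = x then ε else 0))| = |e y + ε| := by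
    simp [hxy.symm]
  have hrest : ∑ v ∈ (Finset.univ.erase x).erase y,
      |e v + ((if v = y then ε else 0) - (if v = x then ε else 0))|
      = ∑ v ∈ (Finset.univ.erase x).erase y, |e v| := by
    refine Finset.sum_congr rfl fun v hv => ?_
    obtain ⟨hvy, hvx, -⟩ : v ≠ y ∧ v ≠ x ∧ True := by
      have h1 := (Finset.mem_erase.mp hv).1
      have h2 := (Finset.mem_erase.mp (Finset.mem_erase.mp hv).2).1
      exact ⟨h1, h2, trivial⟩
    simp [hvy, hvx]
  rw [hx', hy', hrest]
  ring


lemma sum_div_subset (g : V → V → ℝ) (A : Finset V) :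
    ∑ v ∈ A, ((∑ u, g u v) - (∑ u, g v u)) = ∑ v ∈ A, ∑ u ∈ Aᶜ, (g u v - g v u) := by
  have h1 : ∀ v, (∑ u, g u v) - (∑ u, g v u)
      = (∑ u ∈ A, (g u v - g v u)) + ∑ u ∈ Aᶜ, (g u v - g v u) := by
    intro v
    rw [Finset.sum_add_sum_compl, Finset.sum_sub_distrib]
  rw [Finset.sum_congr rfl fun v _ => h1 v, Finset.sum_add_distrib]
  have h2 : ∑ v ∈ A, ∑ u ∈ A, (g u v - g v u) = 0 := by
    have e1 : ∑ v ∈ A, ∑ u ∈ A, (g u v - g v u)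
        = (∑ v ∈ A, ∑ u ∈ A, g u v) - ∑ v ∈ A, ∑ u ∈ A, g v u := by
      simp [Finset.sum_sub_distrib]
    rw [e1, Finset.sum_comm]
    ring
  rw [h2, zero_add]

/-- Construct the modified flow pushing `ε` units of excess from `x` to `y`. -/
lemma push_exists (w : V → V → ℝ) (d : V → ℝ) (M : ℝ) (g : V → V → ℝ)
    (hg0 : ∀ a b, 0 ≤ g a b) (hgM : ∀ a b, g a b ≤ M * w a b)
    {x y : V} {ε : ℝ}
    (hε : (g x y + ε ≤ M * w x y) ∨ (0 < g y x ∧ ε ≤ g y x)) (hε0 : 0 ≤ ε) :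
    ∃ g' : V → V → ℝ, (∀ a b, 0 ≤ g' a b) ∧ (∀ a b, g' a b ≤ M * w a b) ∧
      (∀ v, excF g' d v
        = excF g d v + ((if v = y then ε else 0) - (if v = x then ε else 0))) ∧
      (∀ a b, |g' a b - g a b| ≤ ε) := by
  rcases hε with hf | ⟨hb, hbε⟩
  · refine ⟨pushF g x y ε, ?_, ?_, fun v => excF_pushF g d x y ε v, ?_⟩
    · intro a b
      have : (0:ℝ) ≤ if a = x ∧ b = y then ε else 0 := by positivity
      simpa [pushF] using add_nonneg (hg0 a b) this
    · intro a b
      by_cases hab : a = x ∧ b = y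
      · obtain ⟨rfl, rfl⟩ := hab
        simpa [pushF] using hf
      · simpa [pushF, hab] using hgM a b
    · intro a b
      by_cases hab : a = x ∧ b = y <;> simp [pushF, hab, abs_of_nonneg, hε0]
  · refine ⟨pushF g y x (-ε), ?_, ?_, ?_, ?_⟩
    · intro a b
      unfold pushF
      split
      · rename_i hab
        obtain ⟨rfl, rfl⟩ := hab
        linarith
      · simpa using hg0 a b
    · intro a b
      unfold pushF
      split
      · rename_i hab
        obtain ⟨rfl, rfl⟩ := hab
        have := hgM a b
        linarith
      · simpa using hgM a b
    · intro v
      rw [excF_pushF]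
      split_ifs <;> ring
    · intro a b
      by_cases hab : a = y ∧ b = x <;> simp [pushF, hab, abs_of_nonneg, hε0]

/-- Residual steps are preserved under small perturbations. -/
lemma step_mono (w : V → V → ℝ) (M : ℝ) {g g' : V → V → ℝ} {δ : ℝ}
    (hδf : ∀ a b, g a b < M * w a b → δ ≤ M * w a b - g a b)
    (hδb : ∀ a b, 0 < g a b → δ ≤ g a b)
    (hclose : ∀ a b, |g' a b - g a b| < δ) :
    ∀ a b, (g a b < M * w a b ∨ 0 < g b a) → (g' a b < M * w a b ∨ 0 < g' b a) := by
  intro a b hstep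
  rcases hstep with hf | hb
  · left
    have h1 := hδf a b hf
    have h2 := (abs_lt.mp (hclose a b)).2
    linarith
  · right
    have h1 := hδb b a hb
    have h2 := (abs_lt.mp (hclose b a)).1
    linarith

/-- Key augmentation lemma. -/
lemma augment (w : V → V → ℝ) (d : V → ℝ) (M : ℝ) (s : V) :
    ∀ n : ℕ, ∀ g : V → V → ℝ, (∀ a b, 0 ≤ g a b) → (∀ a b, g a b ≤ M * w a b) →
      excF g d s < 0 →
      ∀ x : V, ∀ l : List V,
        l.length = n →
        List.Chain (fun a b => g a b < M * w a b ∨ 0 < g b a) x l →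
        (x :: l).getLast (List.cons_ne_nil _ _) = s →
        0 < excF g d x →
      ∃ g' : V → V → ℝ, (∀ a b, 0 ≤ g' a b) ∧ (∀ a b, g' a b ≤ M * w a b) ∧
        (∑ v, |excF g' d v|) < ∑ v, |excF g d v| := by
  intro n
  induction n with
  | zero =>
    intro g _ _ hs x l hl _ hlast hx
    have hnil : l = [] := List.length_eq_zero_iff.mp hl
    subst hnil
    simp only [List.getLast_singleton] at hlast
    subst hlast
    linarith
  | succ n ih =>
    intro g hg0 hgM hs x l hl hchain hlast hx
    obtain ⟨y, rest, rfl⟩ : ∃ y rest, l = y :: rest := by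
      cases l with
      | nil => simp at hl
      | cons y rest => exact ⟨y, rest, rfl⟩
    have hlrest : rest.length = n := by simpa using hl
    unfold List.Chain at hchain
    rw [List.chain_cons] at hchain
    obtain ⟨hstep, hchain'⟩ := hchain
    have hlast' : (y :: rest).getLast (List.cons_ne_nil _ _) = s := by
      rwa [List.getLast_cons_cons] at hlast
    -- global residual slack
    have hδ : ∃ δ : ℝ, 0 < δ ∧ (∀ a b, g a b < M * w a b → δ ≤ M * w a b - g a b) ∧
        (∀ a b, 0 < g a b → δ ≤ g a b) := by
      refine ⟨(Finset.univ ×ˢ Finset.univ).inf' ⟨(x, x), Finset.mem_product.mpr ⟨Finset.mem_univ _, Finset.mem_univ _⟩⟩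
        (fun ab => min (if g ab.1 ab.2 < M * w ab.1 ab.2 then M * w ab.1 ab.2 - g ab.1 ab.2 else 1)
          (if 0 < g ab.1 ab.2 then g ab.1 ab.2 else 1)), ?_, ?_, ?_⟩
      · refine (Finset.lt_inf'_iff _).2 ?_
        intro ab _
        refine lt_min ?_ ?_
        · split <;> [linarith [‹g ab.1 ab.2 < M * w ab.1 ab.2›]; norm_num]
        · split <;> [assumption; norm_num]
      · intro a b hab
        have := Finset.inf'_le (b := (a, b))
          (fun ab : V × V => min (if g ab.1 ab.2 < M * w ab.1 ab.2 then M * w ab.1 ab.2 - g ab.1 ab.2 else 1)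
            (if 0 < g ab.1 ab.2 then g ab.1 ab.2 else 1))
          (Finset.mem_product.mpr ⟨Finset.mem_univ _, Finset.mem_univ _⟩)
        calc _ ≤ _ := this
          _ ≤ _ := min_le_left _ _
          _ = M * w a b - g a b := by rw [if_pos hab]
      · intro a b hab
        have := Finset.inf'_le (b := (a, b))
          (fun ab : V × V => min (if g ab.1 ab.2 < M * w ab.1 ab.2 then M * w ab.1 ab.2 - g ab.1 ab.2 else 1)
            (if 0 < g ab.1 ab.2 then g ab.1 ab.2 else 1))
          (Finset.mem_product.mpr ⟨Finset.mem_univ _, Finset.mem_univ _⟩)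
        calc _ ≤ _ := this
          _ ≤ _ := min_le_right _ _
          _ = g a b := by rw [if_pos hab]
    obtain ⟨δ, hδ0, hδf, hδb⟩ := hδ
    by_cases hy : excF g d y < 0
    · -- terminal improving push
      have hxy : x ≠ y := by rintro rfl; linarith
      set ε := min (δ / 2) (min (excF g d x) (-excF g d y)) with hεdef
      have hε0 : 0 < ε := by
        apply lt_min (by linarith) (lt_min hx (by linarith))
      have hεx : ε ≤ excF g d x := le_trans (min_le_right _ _) (min_le_left _ _)
      have hεy : ε ≤ -excF g d y := le_trans (min_le_right _ _) (min_le_right _ _)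
      have hεδ : ε ≤ δ / 2 := min_le_left _ _
      have hεcond : (g x y + ε ≤ M * w x y) ∨ (0 < g y x ∧ ε ≤ g y x) := by
        rcases hstep with hf | hb
        · left; have := hδf x y hf; linarith
        · right; exact ⟨hb, by have := hδb y x hb; linarith⟩
      obtain ⟨g', hg'0, hg'M, hexc, _⟩ :=
        push_exists w d M g hg0 hgM hεcond hε0.le
      refine ⟨g', hg'0, hg'M, ?_⟩
      have hsum : (∑ v, |excF g' d v|)
          = (∑ v, |excF g d v|) - |excF g d x| - |excF g d y|
            + |excF g d x - ε| + |excF g d y + ε| := by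
        rw [show (fun v => |excF g' d v|) = fun v => |excF g d v +
            ((if v = y then ε else 0) - (if v = x then ε else 0))| from funext fun v => by rw [hexc v]]
        exact sum_abs_two (excF g d) hxy ε
      rw [hsum, abs_of_pos hx, abs_of_neg hy,
        abs_of_nonneg (by linarith : (0:ℝ) ≤ excF g d x - ε),
        abs_of_nonpos (by linarith : excF g d y + ε ≤ 0)]
      linarith
    · -- non-terminal push, keep Φ constant, recurse
      push_neg at hy
      set ε := min (δ / 2) (excF g d x) with hεdef
      have hε0 : 0 < ε := lt_min (by linarith) hx
      have hεx : ε ≤ excF g d x := min_le_right _ _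
      have hεδ : ε ≤ δ / 2 := min_le_left _ _
      have hεcond : (g x y + ε ≤ M * w x y) ∨ (0 < g y x ∧ ε ≤ g y x) := by
        rcases hstep with hf | hb
        · left; have := hδf x y hf; linarith
        · right; exact ⟨hb, by have := hδb y x hb; linarith⟩
      obtain ⟨g', hg'0, hg'M, hexc, hclose⟩ :=
        push_exists w d M g hg0 hgM hεcond hε0.le
      have hclose' : ∀ a b, |g' a b - g a b| < δ := fun a b =>
        lt_of_le_of_lt (hclose a b) (by linarith)
      -- chain preserved
      have hchain'' : List.Chain (fun a b => g' a b < M * w a b ∨ 0 < g' b a) y rest :=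
        List.Chain.imp (step_mono w M hδf hδb hclose') hchain'
      -- exc values
      have hsx : s ≠ x := by rintro rfl; linarith
      have hsy : s ≠ y := by rintro rfl; linarith
      have hexcs : excF g' d s < 0 := by
        rw [hexc s, if_neg hsy, if_neg hsx]; simpa using hs
      have hexcy : 0 < excF g' d y := by
        rw [hexc y]
        by_cases hyx : y = x
        · simp [hyx]; subst hyx; linarith
        · rw [if_pos rfl, if_neg hyx]; linarith
      obtain ⟨g'', hg''0, hg''M, hlt⟩ :=
        ih g' hg'0 hg'M hexcs y rest hlrest hchain'' hlast' hexcy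
      refine ⟨g'', hg''0, hg''M, lt_of_lt_of_le hlt ?_⟩
      -- Φ g' = Φ g
      by_cases hxy : x = y
      · subst hxy
        apply le_of_eq
        refine Finset.sum_congr rfl fun v _ => ?_
        rw [hexc v]; ring_nf
      · have hsum : (∑ v, |excF g' d v|)
            = (∑ v, |excF g d v|) - |excF g d x| - |excF g d y|
              + |excF g d x - ε| + |excF g d y + ε| := by
          rw [show (fun v => |excF g' d v|) = fun v => |excF g d v +
              ((if v = y then ε else 0) - (if v = x then ε else 0))| from
            funext fun v => by rw [hexc v]]
          exact sum_abs_two (excF g d) (fun h => hxy h) ε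
        rw [hsum, abs_of_pos hx, abs_of_nonneg hy,
          abs_of_nonneg (by linarith : (0:ℝ) ≤ excF g d x - ε),
          abs_of_nonneg (by linarith : (0:ℝ) ≤ excF g d y + ε)]
        apply le_of_eq; ring

/-- If a demand vector `d` can be routed in a strongly connected directed graph `G`
with congestion `c`, then `−d` can be routed in `G` with congestion at most
`bal(G) · c`. -/
theorem stmt1 (w : V → V → ℝ) (hw : ∀ u v, 0 ≤ w u v) (hsc : StronglyConnected w)
    (d : V → ℝ) (c : ℝ) (hc : 0 ≤ c) (h : Routes w d c) :
    Routes w (fun v => -d v) (bal w * c) := by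
  classical
  obtain ⟨f, hf0, hfc, hfd⟩ := h
  obtain ⟨hbal0, hbalS⟩ := bal_spec w hw hsc
  set M := bal w * c with hM
  have hM0 : 0 ≤ M := mul_nonneg hbal0 hc
  set K : Set (V → V → ℝ) := Set.Icc 0 (fun a b => M * w a b) with hKdef
  have hKne : K.Nonempty :=
    ⟨0, Set.mem_Icc.mpr ⟨le_refl _, Pi.le_def.mpr fun a => Pi.le_def.mpr fun b => by
      simpa using mul_nonneg hM0 (hw a b)⟩⟩
  have hKcpt : IsCompact K := isCompact_Icc
  have hcont : Continuous fun g : V → V → ℝ => ∑ v, |excF g d v| := by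
    apply continuous_finset_sum
    intro v _
    apply Continuous.abs
    unfold excF
    exact (((continuous_finset_sum _ fun u _ => (continuous_apply v).comp (continuous_apply u)).sub
      (continuous_finset_sum _ fun u _ => (continuous_apply u).comp (continuous_apply v))).add
      continuous_const)
  obtain ⟨g, hgK, hgmin⟩ := hKcpt.exists_isMinOn hKne hcont.continuousOn
  have hg0 : ∀ a b, 0 ≤ g a b := by
    intro a b
    have h1 := hgK.1
    rw [Pi.le_def] at h1
    have h2 := h1 a
    rw [Pi.le_def] at h2
    simpa using h2 b
  have hgM : ∀ a b, g a b ≤ M * w a b := by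
    intro a b
    have h1 := hgK.2
    rw [Pi.le_def] at h1
    have h2 := h1 a
    rw [Pi.le_def] at h2
    exact h2 b
  have key : ∀ v, excF g d v = 0 := by
    by_contra hcon
    push_neg at hcon
    obtain ⟨v₀, hv₀⟩ := hcon
    have hsum0 : ∑ v, excF g d v = 0 := by
      have hd : ∑ v, d v = 0 := by
        have e : ∑ v, d v = ∑ v, ((∑ u, f u v) - (∑ u, f v u)) :=
          Finset.sum_congr rfl fun v _ => (hfd v).symm
        rw [e, Finset.sum_sub_distrib, Finset.sum_comm]
        ring
      unfold excF
      rw [Finset.sum_add_distrib, hd, Finset.sum_sub_distrib, Finset.sum_comm]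
      ring
    obtain ⟨t, ht⟩ : ∃ t, 0 < excF g d t := by
      rcases hv₀.lt_or_gt with hneg | hpos
      · by_contra hall
        push_neg at hall
        have h1 : ∑ v, excF g d v < ∑ v, (0:ℝ) :=
          Finset.sum_lt_sum (fun i _ => hall i) ⟨v₀, Finset.mem_univ _, hneg⟩
        simp only [Finset.sum_const_zero] at h1
        linarith
      · exact ⟨v₀, hpos⟩
    set A : Finset V := Finset.univ.filter
      (fun y => Relation.ReflTransGen (fun a b => g a b < M * w a b ∨ 0 < g b a) t y) with hAdef
    by_cases hbad : ∃ s ∈ A, excF g d s < 0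
    · obtain ⟨s, hsA, hs⟩ := hbad
      have hrtg : Relation.ReflTransGen (fun a b => g a b < M * w a b ∨ 0 < g b a) t s :=
        (Finset.mem_filter.mp hsA).2
      obtain ⟨l, hchain, hlast⟩ := List.exists_isChain_cons_of_relationReflTransGen hrtg
      obtain ⟨g', hg'0, hg'M, hlt⟩ :=
        augment w d M s l.length g hg0 hgM hs t l rfl hchain hlast ht
      have hg'K : g' ∈ K := Set.mem_Icc.mpr
        ⟨Pi.le_def.mpr fun a => Pi.le_def.mpr fun b => by simpa using hg'0 a b,
         Pi.le_def.mpr fun a => Pi.le_def.mpr fun b => hg'M a b⟩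
      exact absurd ((isMinOn_iff.mp hgmin) g' hg'K) (not_le.mpr hlt)
    · push_neg at hbad
      have htA : t ∈ A := Finset.mem_filter.mpr ⟨Finset.mem_univ _, Relation.ReflTransGen.refl⟩
      have hedge : ∀ x ∈ A, ∀ y ∈ Aᶜ, g x y = M * w x y ∧ g y x = 0 := by
        intro x hxA y hyA
        have hyn : ¬ Relation.ReflTransGen (fun a b => g a b < M * w a b ∨ 0 < g b a) t y := by
          intro hr
          exact (Finset.mem_compl.mp hyA) (Finset.mem_filter.mpr ⟨Finset.mem_univ _, hr⟩)
        have hns : ¬ (g x y < M * w x y ∨ 0 < g y x) := fun hstep =>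
          hyn (((Finset.mem_filter.mp hxA).2).tail hstep)
        push_neg at hns
        exact ⟨le_antisymm (hgM x y) hns.1, le_antisymm hns.2 (hg0 y x)⟩
      have hdivA : ∑ v ∈ A, ((∑ u, g u v) - (∑ u, g v u)) = -(M * cutWeight w A) := by
        rw [sum_div_subset]
        have e0 : ∀ v ∈ A, ∑ u ∈ Aᶜ, (g u v - g v u) = ∑ u ∈ Aᶜ, ((0:ℝ) - M * w v u) := by
          intro v hv
          refine Finset.sum_congr rfl fun u hu => ?_
          obtain ⟨h1, h2⟩ := hedge v hv u hu
          rw [h1, h2]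
        rw [Finset.sum_congr rfl e0]
        calc ∑ v ∈ A, ∑ u ∈ Aᶜ, ((0:ℝ) - M * w v u)
            = ∑ v ∈ A, ∑ u ∈ Aᶜ, -(M * w v u) := by
              refine Finset.sum_congr rfl fun v _ => Finset.sum_congr rfl fun u _ => by ring
          _ = -∑ v ∈ A, ∑ u ∈ Aᶜ, M * w v u := by
              simp
          _ = -(M * cutWeight w A) := by
              rw [cutWeight, Finset.mul_sum]
              congr 1
              exact Finset.sum_congr rfl fun v _ => (Finset.mul_sum _ _ _).symm
      have hdA : ∑ v ∈ A, d v ≤ M * cutWeight w A := by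
        have e1 : ∑ v ∈ A, d v = ∑ v ∈ A, ∑ u ∈ Aᶜ, (f u v - f v u) := by
          rw [← sum_div_subset f A]
          exact (Finset.sum_congr rfl fun v _ => (hfd v).symm).trans rfl |>.symm ▸ rfl
        have e2 : ∑ v ∈ A, ∑ u ∈ Aᶜ, (f u v - f v u) ≤ ∑ v ∈ A, ∑ u ∈ Aᶜ, c * w u v := by
          refine Finset.sum_le_sum fun v _ => Finset.sum_le_sum fun u _ => ?_
          have h1 := hf0 v u
          have h2 := hfc u v
          linarith
        have e3 : ∑ v ∈ A, ∑ u ∈ Aᶜ, c * w u v = c * cutWeight w Aᶜ := by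
          rw [cutWeight, compl_compl, Finset.mul_sum, Finset.sum_comm]
          exact Finset.sum_congr rfl fun u _ => (Finset.mul_sum _ _ _).symm
        have e4 : c * cutWeight w Aᶜ ≤ c * (bal w * cutWeight w A) := by
          have h5 := hbalS Aᶜ
          rw [compl_compl] at h5
          exact mul_le_mul_of_nonneg_left h5 hc
        calc ∑ v ∈ A, d v = ∑ v ∈ A, ∑ u ∈ Aᶜ, (f u v - f v u) := e1
          _ ≤ ∑ v ∈ A, ∑ u ∈ Aᶜ, c * w u v := e2
          _ = c * cutWeight w Aᶜ := e3
          _ ≤ c * (bal w * cutWeight w A) := e4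
          _ = M * cutWeight w A := by rw [hM]; ring
      have hpos : 0 < ∑ v ∈ A, excF g d v := by
        have h1 : excF g d t ≤ ∑ v ∈ A, excF g d v :=
          Finset.single_le_sum (fun i hi => hbad i hi) htA
        linarith
      have hle : ∑ v ∈ A, excF g d v ≤ 0 := by
        have e5 : ∑ v ∈ A, excF g d v
            = (∑ v ∈ A, ((∑ u, g u v) - (∑ u, g v u))) + ∑ v ∈ A, d v := by
          unfold excF
          rw [Finset.sum_add_distrib]
        rw [e5, hdivA]
        linarith
      linarith
  refine ⟨g, hg0, fun u v => hgM u v, fun x => ?_⟩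
  have hx := key x
  unfold excF at hx
  show (∑ u, g u x) - (∑ u, g x u) = -d x
  linarith
end

section
/- Let G be an undirected graph, d a demand vector routable in G with congestion at most 1, and f a flow from s to t with congestion at most 1 satisfying demands (1−ε)d, for 0 < ε < 1. Then the residual graph H of f in G satisfies bal(H) ≤ 2/ε − 1. -/
open Finset

variable {V : Type*} [Fintype V] [DecidableEq V]

/-- In the undirected graph with symmetric capacities `w`, the demand vector `b` can be
routed with congestion at most `c`: there is a skew-symmetric flow `g` with
`|g u v| ≤ c · w u v` whose net inflow at each vertex `x` is `b x`. -/
def RoutesUndir (w : V → V → ℝ) (b : V → ℝ) (c : ℝ) : Prop :=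
  ∃ g : V → V → ℝ, (∀ u v, g u v = -g v u) ∧ (∀ u v, |g u v| ≤ c * w u v) ∧
    ∀ x : V, (∑ u, g u x) = b x

/-- Let `G` be an undirected graph (symmetric capacities `w`), `d` a demand vector
supported on `{s, t}` routable in `G` with congestion at most `1`, and `f` a flow
from `s` to `t` with congestion at most `1` satisfying demands `(1−ε)·d`, where
`0 < ε < 1`.  Then the residual graph `H` of `f` in `G`, with residual capacities
`w u v − f u v` in direction `u → v`, satisfies `bal(H) ≤ 2/ε − 1`. -/
theorem stmt5 (w : V → V → ℝ) (hw : ∀ u v, 0 ≤ w u v) (hsymm : ∀ u v, w u v = w v u)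
    (s t : V) (d : V → ℝ) (hd_supp : ∀ x, x ≠ s → x ≠ t → d x = 0)
    (hd : RoutesUndir w d 1)
    (ε : ℝ) (hε0 : 0 < ε) (hε1 : ε < 1)
    (f : V → V → ℝ) (hf_skew : ∀ u v, f u v = -f v u)
    (hf_cong : ∀ u v, |f u v| ≤ w u v)
    (hf_dem : ∀ x : V, (∑ u, f u x) = (1 - ε) * d x) :
    ∀ S : Finset V,
      cutWeight (fun u v => w u v - f u v) S ≤
        (2 / ε - 1) * cutWeight (fun u v => w u v - f u v) Sᶜ := by
  obtain ⟨g, hg_skew, hg_cong, hg_dem⟩ := hd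
  intro S
  have skew_zero : ∀ (h : V → V → ℝ), (∀ u v, h u v = -h v u) →
      ∑ x ∈ S, ∑ u ∈ S, h u x = 0 := by
    intro h hs
    have h0 : ∑ x ∈ S, ∑ u ∈ S, (h u x + h x u) = 0 :=
      Finset.sum_eq_zero fun x _ => Finset.sum_eq_zero fun u _ => by rw [hs]; ring
    simp_rw [Finset.sum_add_distrib] at h0
    have h2 : (∑ x ∈ S, ∑ u ∈ S, h x u) = ∑ x ∈ S, ∑ u ∈ S, h u x :=
      Finset.sum_comm
    linarith
  have cut_sum : ∀ (h : V → V → ℝ), (∀ u v, h u v = -h v u) →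
      ∑ u ∈ S, ∑ v ∈ Sᶜ, h u v = - ∑ x ∈ S, ∑ u, h u x := by
    intro h hs
    have split : ∀ x ∈ S, (∑ u, h u x) = ∑ u ∈ S, h u x + ∑ u ∈ Sᶜ, h u x :=
      fun x _ => (Finset.sum_add_sum_compl S _).symm
    rw [Finset.sum_congr rfl split, Finset.sum_add_distrib, skew_zero h hs, zero_add]
    have h1 : (∑ x ∈ S, ∑ u ∈ Sᶜ, h u x) = ∑ x ∈ S, ∑ u ∈ Sᶜ, -h x u :=
      Finset.sum_congr rfl fun x _ => Finset.sum_congr rfl fun u _ => hs u x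
    rw [h1]
    simp only [Finset.sum_neg_distrib, neg_neg]
  set W : ℝ := ∑ u ∈ S, ∑ v ∈ Sᶜ, w u v with hW
  set F : ℝ := ∑ u ∈ S, ∑ v ∈ Sᶜ, f u v with hFdef
  set D : ℝ := ∑ u ∈ S, ∑ v ∈ Sᶜ, g u v with hDdef
  have hF : F = -(1 - ε) * ∑ x ∈ S, d x := by
    rw [hFdef, cut_sum f hf_skew]
    simp_rw [hf_dem]
    rw [← Finset.mul_sum]
    ring
  have hD : D = - ∑ x ∈ S, d x := by
    rw [hDdef, cut_sum g hg_skew]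
    simp_rw [hg_dem]
  have hFD : F = (1 - ε) * D := by rw [hF, hD]; ring
  have hWD : 0 ≤ W + D := by
    have : -W ≤ D := by
      rw [hW, hDdef, ← Finset.sum_neg_distrib]
      apply Finset.sum_le_sum
      intro u _
      rw [← Finset.sum_neg_distrib]
      apply Finset.sum_le_sum
      intro v _
      have := hg_cong u v
      rw [one_mul] at this
      have := abs_le.mp this
      linarith [this.1]
    linarith
  have hcut1 : cutWeight (fun u v => w u v - f u v) S = W - F := by
    rw [cutWeight, hW, hFdef, ← Finset.sum_sub_distrib]
    apply Finset.sum_congr rfl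
    intro u _
    rw [← Finset.sum_sub_distrib]
  have hcut2 : cutWeight (fun u v => w u v - f u v) Sᶜ = W + F := by
    rw [cutWeight, compl_compl]
    have : ∀ u ∈ Sᶜ, ∑ v ∈ S, (w u v - f u v) = ∑ v ∈ S, (w v u + f v u) := by
      intro u _
      apply Finset.sum_congr rfl
      intro v _
      rw [hsymm u v, hf_skew u v]
      ring
    rw [Finset.sum_congr rfl this, Finset.sum_comm, hW, hFdef, ← Finset.sum_add_distrib]
    apply Finset.sum_congr rfl
    intro u _
    rw [← Finset.sum_add_distrib]
  rw [hcut1, hcut2]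
  rw [show (2 / ε - 1) = (2 - ε) / ε by field_simp, div_mul_eq_mul_div,
    le_div_iff₀ hε0]
  nlinarith [mul_nonneg (by linarith : (0:ℝ) ≤ 1 - ε) hWD]
end

section
/- No oblivious routing scheme for Eulerian directed graphs can guarantee a competitive ratio better than Ω(√n). Specifically, for the graph on n vertices consisting of a forward directed cycle C₁ of weight-1 edges and the reverse directed cycle C₂ (including an extra edge (v₁,vₙ)) of weight √n, any oblivious routing has competitive ratio at least √(n−1)/2. -/
open Finset

section Framework

variable {V : Type*} [Fintype V] [DecidableEq V]

/-- A nonnegative flow supported on the edges of the graph. -/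
def IsFlow (w : V → V → ℝ) (f : V → V → ℝ) : Prop :=
  (∀ x y, 0 ≤ f x y) ∧ (∀ x y, w x y = 0 → f x y = 0)

/-- Net outflow of `f` at `x`. -/
def netFlow (f : V → V → ℝ) (x : V) : ℝ :=
  (∑ y, f x y) - (∑ y, f y x)

/-- A unit flow from `u` to `v`. -/
def IsUnitFlow (w : V → V → ℝ) (u v : V) (f : V → V → ℝ) : Prop :=
  IsFlow w f ∧
    ∀ x, netFlow f x = (if x = u then (1 : ℝ) else 0) - (if x = v then 1 else 0)

/-- `f` has congestion at most `c`. -/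
def CongestionLe (w f : V → V → ℝ) (c : ℝ) : Prop :=
  ∀ x y, f x y ≤ c * w x y

/-- An oblivious routing scheme: a fixed unit flow for every pair. -/
def IsObliviousRouting (w : V → V → ℝ) (A : V → V → V → V → ℝ) : Prop :=
  ∀ u v, IsUnitFlow w u v (A u v)

/-- The multicommodity flow induced by `A` on demands `D`. -/
def inducedFlow (A : V → V → V → V → ℝ) (D : V → V → ℝ) : V → V → ℝ :=
  fun x y => ∑ u, ∑ v, D u v * A u v x y

/-- The demands `D` admit a multicommodity routing with congestion at most `c`. -/
def MultiRoutable (w : V → V → ℝ) (D : V → V → ℝ) (c : ℝ) : Prop :=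
  ∃ F : V → V → V → V → ℝ,
    (∀ u v, IsFlow w (F u v) ∧
      ∀ x, netFlow (F u v) x =
        D u v * ((if x = u then (1 : ℝ) else 0) - (if x = v then 1 else 0))) ∧
    CongestionLe w (fun x y => ∑ u, ∑ v, F u v x y) c

/-- `A` has competitive ratio at most `c`. -/
def CompetitiveRatioLe (w : V → V → ℝ) (A : V → V → V → V → ℝ) (c : ℝ) : Prop :=
  ∀ D : V → V → ℝ, (∀ u v, 0 ≤ D u v) →
    ∀ c' > (0 : ℝ), MultiRoutable w D c' → CongestionLe w (inducedFlow A D) (c * c')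

end Framework

/-- The Eulerian lower-bound graph on `Fin n`: the forward cycle `C₁` of weight-1
edges `i → i+1` and the reverse cycle `C₂` of weight-`√n` edges `i+1 → i`
(including the edge `v₁ → vₙ`). -/
noncomputable def cycWeight (n : ℕ) [NeZero n] : Fin n → Fin n → ℝ :=
  fun i j => (if j = i + 1 then 1 else 0) + (if i = j + 1 then Real.sqrt n else 0)

section Aux
open Finset
open Fin.NatCast Fin.CommRing

lemma netFlow_smul {V : Type*} [Fintype V] (d : ℝ) (f : V → V → ℝ) (x : V) :
    netFlow (fun a b => d * f a b) x = d * netFlow f x := by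
  simp [netFlow, Finset.mul_sum, mul_sub]

variable {n : ℕ} [NeZero n]

lemma cycWeight_nonneg (x y : Fin n) : 0 ≤ cycWeight n x y := by
  unfold cycWeight; positivity

lemma cycWeight_eq_zero (x y : Fin n) (h1 : y ≠ x + 1) (h2 : x ≠ y + 1) :
    cycWeight n x y = 0 := by simp [cycWeight, h1, h2]

lemma cycWeight_fwd_ge_one (x y : Fin n) (h : y = x + 1) : 1 ≤ cycWeight n x y := by
  have : (0:ℝ) ≤ if x = y + 1 then Real.sqrt n else 0 := by positivity
  simp only [cycWeight, if_pos h]; linarith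

lemma one_ne_zero_fin (hn : 2 ≤ n) : (1 : Fin n) ≠ 0 := by
  simp [Fin.one_eq_zero_iff]; omega

lemma succ_ne_self_fin (hn : 2 ≤ n) (i : Fin n) : i + 1 ≠ i := by
  intro h
  have : (1 : Fin n) = 0 := by
    have := congrArg (fun z => z - i) h
    simpa [add_comm, add_sub_cancel_right, sub_self] using this
  exact one_ne_zero_fin hn this

lemma two_ne_zero_fin (hn : 3 ≤ n) : (1 : Fin n) + 1 ≠ 0 := by
  have h2 : ((2:ℕ) : Fin n) ≠ 0 := by
    rw [Ne, Fin.natCast_eq_zero]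
    intro hd
    exact absurd (Nat.le_of_dvd (by norm_num) hd) (by omega)
  have : ((2:ℕ) : Fin n) = 1 + 1 := by push_cast; ring
  rwa [this] at h2

lemma add_two_ne_self_fin (hn : 3 ≤ n) (i : Fin n) : i + 1 + 1 ≠ i := by
  intro h
  apply two_ne_zero_fin hn
  have h1 : i + (1 + 1) = i + 0 := by rw [← add_assoc, h, add_zero]
  exact add_left_cancel h1

lemma sub_one_eq_iff_fin (x i : Fin n) : x - 1 = i ↔ x = i + 1 := by
  constructor
  · intro h; rw [← h, sub_add_cancel]
  · intro h; rw [h, add_sub_cancel_right]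

end Aux

section Struct
open Finset
open Fin.NatCast Fin.CommRing
variable {n : ℕ} [NeZero n]

lemma sum_out_eq (hn : 3 ≤ n) (f : Fin n → Fin n → ℝ)
    (hsupp : ∀ x y, cycWeight n x y = 0 → f x y = 0) (v : Fin n) :
    ∑ y, f v y = f v (v + 1) + f v (v - 1) := by
  have hne : (v + 1 : Fin n) ≠ v - 1 := by
    intro h
    apply two_ne_zero_fin hn
    have h2 : (v + 1) - (v - 1) = (0 : Fin n) := sub_eq_zero.mpr h
    calc (1:Fin n) + 1 = (v + 1) - (v - 1) := by ring
    _ = 0 := h2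
  have hpt : ∀ y, f v y = (if y = v + 1 then f v y else 0) + (if y = v - 1 then f v y else 0) := by
    intro y
    by_cases h1 : y = v + 1
    · rw [if_pos h1, if_neg (by rw [h1]; exact hne), add_zero]
    · by_cases h2 : y = v - 1
      · rw [if_neg h1, if_pos h2, zero_add]
      · have hz : f v y = 0 := hsupp _ _ (cycWeight_eq_zero v y h1
          (fun hv => h2 (by rw [hv, add_sub_cancel_right])))
        simp [h1, h2, hz]
  rw [Finset.sum_congr rfl (fun y _ => hpt y), Finset.sum_add_distrib]
  simp [Finset.sum_ite_eq']

lemma sum_in_eq (hn : 3 ≤ n) (f : Fin n → Fin n → ℝ)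
    (hsupp : ∀ x y, cycWeight n x y = 0 → f x y = 0) (v : Fin n) :
    ∑ y, f y v = f (v - 1) v + f (v + 1) v := by
  have hne : (v - 1 : Fin n) ≠ v + 1 := by
    intro h
    apply two_ne_zero_fin hn
    have h2 : (v + 1) - (v - 1) = (0 : Fin n) := sub_eq_zero.mpr h.symm
    calc (1:Fin n) + 1 = (v + 1) - (v - 1) := by ring
    _ = 0 := h2
  have hpt : ∀ y, f y v = (if y = v - 1 then f y v else 0) + (if y = v + 1 then f y v else 0) := by
    intro y
    by_cases h1 : y = v - 1
    · rw [if_pos h1, if_neg (by rw [h1]; exact hne), add_zero]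
    · by_cases h2 : y = v + 1
      · rw [if_neg h1, if_pos h2, zero_add]
      · have hz : f y v = 0 := hsupp _ _ (cycWeight_eq_zero y v
          (fun hv => h1 (by rw [hv, add_sub_cancel_right])) h2)
        simp [h1, h2, hz]
  rw [Finset.sum_congr rfl (fun y _ => hpt y), Finset.sum_add_distrib]
  simp [Finset.sum_ite_eq']

lemma netFlow_cyc (hn : 3 ≤ n) (f : Fin n → Fin n → ℝ)
    (hsupp : ∀ x y, cycWeight n x y = 0 → f x y = 0) (v : Fin n) :
    netFlow f v = (f v (v+1) - f (v+1) v) - (f (v-1) v - f v (v-1)) := by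
  rw [netFlow, sum_out_eq hn f hsupp v, sum_in_eq hn f hsupp v]; ring

lemma reverse_lower (hn : 3 ≤ n) (i x : Fin n) (hx : x ≠ i)
    (f : Fin n → Fin n → ℝ) (hf : IsUnitFlow (cycWeight n) i (i+1) f) :
    1 - f i (i+1) ≤ f (x+1) x := by
  obtain ⟨⟨hpos, hsupp⟩, hnet⟩ := hf
  set φ : Fin n → ℝ := fun v => f v (v+1) - f (v+1) v with hφ
  have hnf : ∀ v, φ v - φ (v-1) =
      (if v = i then (1:ℝ) else 0) - (if v = i+1 then 1 else 0) := by
    intro v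
    rw [← hnet v, netFlow_cyc hn f hsupp v]
    simp only [hφ]
    rw [sub_add_cancel]
  have key : ∀ k : ℕ, 1 ≤ k → k ≤ n - 1 → φ (i + (k:ℕ)) = φ i - 1 := by
    intro k
    induction k with
    | zero => exact fun h _ => absurd h (by omega)
    | succ m ih =>
      intro _ hle
      rcases Nat.eq_zero_or_pos m with hm | hm
      · subst hm
        have h1 : ((0+1:ℕ) : Fin n) = 1 := by norm_num
        rw [h1]
        have hv := hnf (i+1)
        rw [add_sub_cancel_right, if_neg (succ_ne_self_fin (by omega) i), if_pos rfl] at hv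
        linarith
      · have hm' := ih hm (by omega)
        have hcast : ((m+1 : ℕ) : Fin n) = ((m:ℕ) : Fin n) + 1 := by push_cast; ring
        have hv := hnf (i + ((m+1:ℕ) : Fin n))
        have hsub : i + ((m+1:ℕ):Fin n) - 1 = i + ((m:ℕ):Fin n) := by
          rw [hcast, ← add_assoc, add_sub_cancel_right]
        have hne1 : i + ((m+1:ℕ):Fin n) ≠ i := by
          intro h
          have h0 : ((m+1:ℕ):Fin n) = 0 := by
            have := congrArg (fun z => z - i) h
            simpa [add_comm, add_sub_cancel_right, sub_self] using this
          rw [Fin.natCast_eq_zero] at h0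
          have := Nat.le_of_dvd (by omega) h0; omega
        have hne2 : i + ((m+1:ℕ):Fin n) ≠ i + 1 := by
          intro h
          have h1 : ((m+1:ℕ):Fin n) = 1 := add_left_cancel h
          have hm0 : ((m:ℕ):Fin n) = 0 := by
            have := congrArg (fun z => z - 1) h1
            simpa [hcast, add_sub_cancel_right] using this
          rw [Fin.natCast_eq_zero] at hm0
          have := Nat.le_of_dvd (by omega) hm0; omega
        rw [if_neg hne1, if_neg hne2, hsub, hm'] at hv
        linarith
  have hxi : x - i ≠ 0 := sub_ne_zero.mpr hx
  have hk1 : 1 ≤ (x - i).val := Nat.one_le_iff_ne_zero.mpr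
    (fun h => hxi (Fin.ext (by simp [h])))
  have hk2 : (x - i).val ≤ n - 1 := by have := (x - i).isLt; omega
  have hfin := key (x - i).val hk1 hk2
  rw [Fin.cast_val_eq_self, add_sub_cancel] at hfin
  simp only [hφ] at hfin
  have h1 := hpos x (x+1)
  have h2 := hpos (i+1) i
  linarith
end Struct

section Single
open Finset
variable {n : ℕ} [NeZero n]

lemma single_bound (hn : 2 ≤ n) (A : Fin n → Fin n → Fin n → Fin n → ℝ)
    (c : ℝ) (hcomp : CompetitiveRatioLe (cycWeight n) A c) (i : Fin n) :
    ∀ x y, A i (i+1) x y ≤ (c * (1 / (1 + Real.sqrt n))) * cycWeight n x y := by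
  set s := Real.sqrt n with hs
  have hs0 : 0 ≤ s := Real.sqrt_nonneg n
  have hsp : (0:ℝ) < 1 + s := by linarith
  set α : ℝ := 1/(1+s) with hα
  set β : ℝ := s/(1+s) with hβ
  have hα0 : 0 ≤ α := by positivity
  have hβ0 : 0 ≤ β := by positivity
  have hαβ : α + β = 1 := by rw [hα, hβ]; field_simp
  have hβα : β = α * s := by rw [hα, hβ]; ring
  set D : Fin n → Fin n → ℝ := fun u v => if u = i ∧ v = i+1 then 1 else 0 with hD
  set g : Fin n → Fin n → ℝ := fun x y =>
    (if y = x+1 ∧ x = i then α else 0) + (if x = y+1 ∧ y ≠ i then β else 0) with hg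
  have hs1 : 1 ≤ s := by
    rw [hs]; exact Real.one_le_sqrt.mpr (by exact_mod_cast Nat.one_le_of_lt hn)
  have hg0 : ∀ x y, 0 ≤ g x y := by
    intro x y; rw [hg]; dsimp only
    refine add_nonneg ?_ ?_ <;> split_ifs <;> first | linarith | rfl
  have hgsupp : ∀ x y, cycWeight n x y = 0 → g x y = 0 := by
    intro x y h
    have hb : (0:ℝ) ≤ if x = y + 1 then s else 0 := by split_ifs <;> linarith
    have ha : (0:ℝ) ≤ if y = x + 1 then (1:ℝ) else 0 := by split_ifs <;> linarith
    have h1 : y ≠ x + 1 := by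
      intro hf
      simp only [cycWeight, if_pos hf] at h
      linarith
    have h2 : x ≠ y + 1 := by
      intro hf
      simp only [cycWeight, if_pos hf] at h
      linarith
    simp [hg, h1, h2]
  have hout : ∀ x, ∑ y, g x y = (if x = i then α else 0) + (if x = i + 1 then 0 else β) := by
    intro x
    have hpt : ∀ y, g x y = (if y = x+1 then (if x = i then α else 0) else 0)
        + (if y = x - 1 then (if y ≠ i then β else 0) else 0) := by
      intro y
      rw [hg]; dsimp only
      rw [ite_and]
      congr 1
      rw [ite_and]
      by_cases h : x = y + 1
      · have h' : y = x - 1 := by rw [h, add_sub_cancel_right]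
        rw [if_pos h, if_pos h']
      · have h' : ¬ y = x - 1 := fun hy => h (by rw [hy, sub_add_cancel])
        rw [if_neg h, if_neg h']
    rw [Finset.sum_congr rfl (fun y _ => hpt y), Finset.sum_add_distrib,
      Finset.sum_ite_eq' univ (x+1), Finset.sum_ite_eq' univ (x-1)]
    simp only [mem_univ, if_true]
    congr 1
    by_cases hxi : x = i + 1 <;> simp [sub_one_eq_iff_fin, hxi]
  have hin : ∀ x, ∑ y, g y x = (if x = i + 1 then α else 0) + (if x = i then 0 else β) := by
    intro x
    have hpt : ∀ y, g y x = (if y = x - 1 then (if y = i then α else 0) else 0)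
        + (if y = x + 1 then (if x ≠ i then β else 0) else 0) := by
      intro y
      rw [hg]; dsimp only
      congr 1
      · rw [ite_and]
        by_cases h : x = y + 1
        · have h' : y = x - 1 := by rw [h, add_sub_cancel_right]
          rw [if_pos h, if_pos h']
        · have h' : ¬ y = x - 1 := fun hy => h (by rw [hy, sub_add_cancel])
          rw [if_neg h, if_neg h']
      · rw [ite_and]
    rw [Finset.sum_congr rfl (fun y _ => hpt y), Finset.sum_add_distrib,
      Finset.sum_ite_eq' univ (x-1), Finset.sum_ite_eq' univ (x+1)]
    simp only [mem_univ, if_true]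
    congr 1
    · by_cases hxi : x = i + 1 <;> simp [sub_one_eq_iff_fin, hxi]
    · by_cases hxi : x = i <;> simp [hxi]
  have hnetg : ∀ x, netFlow g x = (if x = i then (1:ℝ) else 0) - (if x = i+1 then 1 else 0) := by
    intro x
    rw [netFlow, hout x, hin x]
    by_cases h1 : x = i
    · subst h1
      have h2 : x ≠ x + 1 := (succ_ne_self_fin hn x).symm
      simp [h2]
      linarith
    · by_cases h2 : x = i + 1
      · simp only [if_pos h2, if_neg h1]
        linarith
      · simp only [if_neg h1, if_neg h2]
        ring
  have hD0 : ∀ u v, 0 ≤ D u v := by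
    intro u v; rw [hD]; dsimp only; split_ifs <;> norm_num
  have hsum : ∀ x y, ∑ u, ∑ v, D u v * A u v x y = A i (i+1) x y := by
    intro x y
    rw [hD]; dsimp only
    simp [ite_and, Finset.sum_ite_eq', mul_ite, ite_mul]
  have hgcong : ∀ x y, g x y ≤ α * cycWeight n x y := by
    intro x y
    have e : α * cycWeight n x y
        = (if y = x+1 then α else 0) + (if x = y+1 then β else 0) := by
      simp only [cycWeight, mul_add, mul_ite, mul_one, mul_zero, ← hs, ← hβα]
    rw [e, hg]; dsimp only
    apply add_le_add <;> split_ifs <;> simp_all <;> linarith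
  have hMR : MultiRoutable (cycWeight n) D α := by
    refine ⟨fun u v x y => D u v * g x y, fun u v => ⟨⟨?_, ?_⟩, ?_⟩, ?_⟩
    · intro x y; exact mul_nonneg (hD0 u v) (hg0 x y)
    · intro x y h; dsimp only; rw [hgsupp x y h, mul_zero]
    · intro x
      dsimp only
      rw [netFlow_smul, hnetg x]
      by_cases h : u = i ∧ v = i + 1
      · rw [h.1, h.2]
      · rw [hD]; dsimp only
        rw [if_neg h]
        simp
    · intro x y
      have e : ∑ u, ∑ v, D u v * g x y = g x y := by
        rw [hD]; dsimp only
        simp [ite_and, Finset.sum_ite_eq', ite_mul]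
      dsimp only
      rw [e]
      exact hgcong x y
  have hcong := hcomp D hD0 α (by positivity) hMR
  intro x y
  have h := hcong x y
  rw [show inducedFlow A D x y = A i (i+1) x y from hsum x y] at h
  exact h
end Single

section Big
open Finset
variable {n : ℕ} [NeZero n]

lemma big_bound (hn : 2 ≤ n) (A : Fin n → Fin n → Fin n → Fin n → ℝ)
    (c : ℝ) (hcomp : CompetitiveRatioLe (cycWeight n) A c) :
    ∀ x y, ∑ u, A u (u+1) x y ≤ c * cycWeight n x y := by
  set D : Fin n → Fin n → ℝ := fun u v => if v = u + 1 then 1 else 0 with hD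
  set F : Fin n → Fin n → Fin n → Fin n → ℝ :=
    fun u v x y => if v = u + 1 ∧ x = u ∧ y = u + 1 then 1 else 0 with hF
  have hD0 : ∀ u v, 0 ≤ D u v := by
    intro u v; rw [hD]; dsimp only; split_ifs <;> norm_num
  have hMR : MultiRoutable (cycWeight n) D 1 := by
    refine ⟨F, fun u v => ⟨⟨?_, ?_⟩, ?_⟩, ?_⟩
    · intro x y; rw [hF]; dsimp only; split_ifs <;> norm_num
    · intro x y h
      rw [hF]; dsimp only
      rw [if_neg]
      rintro ⟨h1, h2, h3⟩
      have hge : (1:ℝ) ≤ cycWeight n x y := cycWeight_fwd_ge_one x y (by rw [h3, h2])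
      rw [h] at hge; linarith
    · intro x
      rw [netFlow]
      have hpo : ∀ y, F u v x y
          = if y = u + 1 then (if v = u+1 ∧ x = u then (1:ℝ) else 0) else 0 := by
        intro y; rw [hF]; dsimp only; split_ifs <;> tauto
      have hpi : ∀ y, F u v y x
          = if y = u then (if v = u+1 ∧ x = u + 1 then (1:ℝ) else 0) else 0 := by
        intro y; rw [hF]; dsimp only; split_ifs <;> tauto
      rw [Finset.sum_congr rfl (fun y _ => hpo y), Finset.sum_congr rfl (fun y _ => hpi y),
        Finset.sum_ite_eq' univ (u+1), Finset.sum_ite_eq' univ u]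
      simp only [mem_univ, if_true]
      rw [hD]; dsimp only
      by_cases h : v = u + 1 <;> simp [h]
    · intro x y
      dsimp only
      have h1 : ∀ u : Fin n, ∑ v, F u v x y = if x = u ∧ y = u + 1 then (1:ℝ) else 0 := by
        intro u
        have hp : ∀ v : Fin n, F u v x y
            = if v = u+1 then (if x = u ∧ y = u+1 then (1:ℝ) else 0) else 0 := by
          intro v; rw [hF]; dsimp only; split_ifs <;> tauto
        rw [Finset.sum_congr rfl (fun v _ => hp v), Finset.sum_ite_eq' univ (u+1)]
        simp
      have h2 : ∀ u : Fin n, (if x = u ∧ y = u + 1 then (1:ℝ) else 0)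
          = if u = x then (if y = x+1 then (1:ℝ) else 0) else 0 := by
        intro u
        by_cases hux : u = x
        · subst hux
          by_cases hy : y = u + 1 <;> simp [hy]
        · rw [if_neg hux, if_neg (fun hc => hux hc.1.symm)]
      rw [Finset.sum_congr rfl (fun u _ => h1 u), Finset.sum_congr rfl (fun u _ => h2 u),
        Finset.sum_ite_eq' univ x]
      simp only [mem_univ, if_true, one_mul]
      split_ifs with h
      · exact cycWeight_fwd_ge_one x y h
      · exact cycWeight_nonneg x y
  have hcong := hcomp D hD0 1 one_pos hMR
  intro x y
  have h := hcong x y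
  rw [mul_one] at h
  have e : inducedFlow A D x y = ∑ u, A u (u+1) x y := by
    rw [inducedFlow]
    refine Finset.sum_congr rfl (fun u _ => ?_)
    rw [hD]; dsimp only
    simp [ite_mul, Finset.sum_ite_eq']
  rw [e] at h
  exact h
end Big

/-- No oblivious routing on the Eulerian two-cycle graph has competitive ratio better
than `√(n−1)/2`; hence no oblivious routing for Eulerian graphs can guarantee a
competitive ratio better than `Ω(√n)`. -/
theorem stmt9 (n : ℕ) [NeZero n] (hn : 2 ≤ n)
    (A : Fin n → Fin n → Fin n → Fin n → ℝ)
    (hA : IsObliviousRouting (cycWeight n) A)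
    (c : ℝ) (hc : 0 ≤ c) (hcomp : CompetitiveRatioLe (cycWeight n) A c) :
    Real.sqrt (n - 1) / 2 ≤ c := by
  rcases eq_or_lt_of_le hn with h2 | h3
  · -- n = 2
    subst h2
    have hs0 : (0:ℝ) ≤ Real.sqrt 2 := Real.sqrt_nonneg 2
    have hsp : (0:ℝ) < 1 + Real.sqrt 2 := by linarith
    have e01 : (0 + 1 : Fin 2) = 1 := rfl
    have hsb := single_bound (le_refl 2) A c hcomp 0 0 1
    rw [e01] at hsb
    have hw : cycWeight 2 0 1 = 1 + Real.sqrt 2 := by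
      show (if (1:Fin 2) = 0 + 1 then (1:ℝ) else 0)
          + (if (0:Fin 2) = 1 + 1 then Real.sqrt ((2:ℕ):ℝ) else 0) = 1 + Real.sqrt 2
      have d1 : (1:Fin 2) = 0 + 1 := rfl
      have d2 : (0:Fin 2) = 1 + 1 := rfl
      rw [if_pos d1, if_pos d2]
      norm_num
    rw [hw] at hsb
    have hcast : Real.sqrt (((2:ℕ):ℝ)) = Real.sqrt 2 := by norm_num
    rw [hcast] at hsb
    have heq : c * (1 / (1 + Real.sqrt 2)) * (1 + Real.sqrt 2) = c := by field_simp
    rw [heq] at hsb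
    have hnet := (hA 0 1).2 0
    rw [netFlow, Fin.sum_univ_two, Fin.sum_univ_two] at hnet
    have d3 : ¬ ((0:Fin 2) = 1) := fun h => by simpa using congrArg Fin.val h
    rw [if_pos rfl, if_neg d3] at hnet
    norm_num at hnet
    have hpos := (hA 0 1).1.1 1 0
    have hub : (1:ℝ) ≤ A 0 1 0 1 := by linarith
    have hgoal : Real.sqrt (((2:ℕ):ℝ) - 1) = 1 := by norm_num
    rw [hgoal]
    linarith
  · -- n ≥ 3
    have hn3 : 3 ≤ n := h3
    have hnR : (2:ℝ) ≤ (n:ℝ) := by exact_mod_cast hn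
    have hs0 : (0:ℝ) ≤ Real.sqrt n := Real.sqrt_nonneg n
    have hs1 : (1:ℝ) ≤ Real.sqrt n := Real.one_le_sqrt.mpr (by linarith)
    have hssq : Real.sqrt n * Real.sqrt n = (n:ℝ) := Real.mul_self_sqrt (by linarith)
    have hr0 : (0:ℝ) ≤ Real.sqrt ((n:ℝ) - 1) := Real.sqrt_nonneg _
    have hr1 : (1:ℝ) ≤ Real.sqrt ((n:ℝ) - 1) := Real.one_le_sqrt.mpr (by linarith)
    have hrsq : Real.sqrt ((n:ℝ) - 1) * Real.sqrt ((n:ℝ) - 1) = (n:ℝ) - 1 :=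
      Real.mul_self_sqrt (by linarith)
    have hsp : (0:ℝ) < 1 + Real.sqrt n := by linarith
    have hsingle := single_bound hn A c hcomp
    have hbig := big_bound hn A c hcomp 1 0
    have hw10 : cycWeight n 1 0 = Real.sqrt n := by
      show (if (0:Fin n) = 1 + 1 then (1:ℝ) else 0)
          + (if (1:Fin n) = 0 + 1 then Real.sqrt n else 0) = Real.sqrt n
      rw [if_neg (fun h => two_ne_zero_fin hn3 h.symm), if_pos (zero_add 1).symm, zero_add]
    have hwfw : ∀ u : Fin n, cycWeight n u (u+1) = 1 := by
      intro u
      show (if u + 1 = u + 1 then (1:ℝ) else 0)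
          + (if u = u + 1 + 1 then Real.sqrt n else 0) = 1
      rw [if_pos rfl, if_neg (fun h => add_two_ne_self_fin hn3 u h.symm), add_zero]
    have hkey : ∀ u : Fin n, u ≠ 0 →
        1 - c * (1 / (1 + Real.sqrt n)) ≤ A u (u+1) 1 0 := by
      intro u hu
      have hrl := reverse_lower hn3 u 0 (Ne.symm hu) (A u (u+1)) (hA u (u+1))
      rw [zero_add] at hrl
      have hsb := hsingle u u (u+1)
      rw [hwfw u, mul_one] at hsb
      linarith
    have hsum : ((n:ℝ) - 1) * (1 - c * (1 / (1 + Real.sqrt n))) ≤ ∑ u, A u (u+1) 1 0 := by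
      have step1 : ((n:ℝ)-1) * (1 - c * (1 / (1 + Real.sqrt n)))
          = ((univ : Finset (Fin n)).erase 0).card • (1 - c * (1 / (1 + Real.sqrt n))) := by
        rw [Finset.card_erase_of_mem (mem_univ 0), Finset.card_univ, Fintype.card_fin,
          nsmul_eq_mul]
        congr 1
        rw [Nat.cast_sub (by omega : 1 ≤ n), Nat.cast_one]
      rw [step1]
      calc ((univ : Finset (Fin n)).erase 0).card • (1 - c * (1 / (1 + Real.sqrt n)))
          ≤ ∑ u ∈ (univ : Finset (Fin n)).erase 0, A u (u+1) 1 0 :=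
            Finset.card_nsmul_le_sum _ _ _
              (fun u hu => hkey u (Finset.ne_of_mem_erase hu))
        _ ≤ ∑ u, A u (u+1) 1 0 :=
            Finset.sum_le_sum_of_subset_of_nonneg (Finset.erase_subset _ _)
              (fun u _ _ => (hA u (u+1)).1.1 1 0)
    rw [hw10] at hbig
    have key : ((n:ℝ) - 1) * (1 - c * (1 / (1 + Real.sqrt n))) ≤ c * Real.sqrt n :=
      le_trans hsum hbig
    -- arithmetic
    set S := Real.sqrt n with hS
    set R := Real.sqrt ((n:ℝ) - 1) with hR
    have hdiv : ((n:ℝ) - 1) * (1 / (1 + S)) = S - 1 := by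
      have e : (n:ℝ) - 1 = (S - 1) * (1 + S) := by nlinarith [hssq]
      rw [e]
      field_simp
    have h1 : R * R ≤ c * (2 * S - 1) := by
      have expand : ((n:ℝ)-1) * (1 - c * (1 / (1 + S)))
          = ((n:ℝ)-1) - c * (((n:ℝ)-1) * (1 / (1 + S))) := by ring
      rw [expand, hdiv] at key
      nlinarith [hrsq]
    have hSR : (0:ℝ) < S + R := by linarith
    have e2 : (S - R) * (S + R) = 1 := by nlinarith [hssq, hrsq]
    have hsr2 : (2:ℝ) ≤ S + R := by linarith
    have hfrac : S - R = 1 / (S + R) := by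
      rw [eq_div_iff hSR.ne']; exact e2
    have hfrac2 : 1 / (S + R) ≤ 1 / 2 := by
      apply one_div_le_one_div_of_le <;> linarith
    have h2' : 2 * S - 1 ≤ 2 * R := by
      have : S - R ≤ 1/2 := by rw [hfrac]; exact hfrac2
      linarith
    have h3' : R * R ≤ 2 * c * R := by
      calc R * R ≤ c * (2 * S - 1) := h1
        _ ≤ c * (2 * R) := mul_le_mul_of_nonneg_left h2' hc
        _ = 2 * c * R := by ring
    have hRpos : (0:ℝ) < R := by linarith
    have hfin : R ≤ 2 * c := le_of_mul_le_mul_right (by linarith [h3']) hRpos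
    linarith
end

section
/- Let G be a directed Eulerian weighted graph with edge lengths, and let 0 < x_L < x_R. Let G′ be G collapsed to [x_L, x_R]. Then vol(G′) ≤ 2·Σ_{e ∈ E : l(e) > x_L/n} w(e)·min(l(e), x_R), where n is the number of vertices. -/
open Finset
open scoped Classical

variable {V : Type*} [Fintype V] [DecidableEq V]

/-- `G` is Eulerian: weighted in-degree equals weighted out-degree at every vertex. -/
def IsEulerian (w : V → V → ℝ) : Prop :=
  ∀ v : V, (∑ u, w u v) = ∑ u, w v u

/-- Reachability following only arcs of length at most `xL`. -/
def ShortReach (w l : V → V → ℝ) (xL : ℝ) : V → V → Prop :=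
  Relation.ReflTransGen (fun a b => 0 < w a b ∧ l a b ≤ xL)

/-- `u` and `v` are merged when collapsing to `[xL, xR]`: they can reach each other
following only arcs of length at most `xL`. -/
def Merged (w l : V → V → ℝ) (xL : ℝ) (u v : V) : Prop :=
  ShortReach w l xL u v ∧ ShortReach w l xL v u

/-- Let `G` be a directed Eulerian weighted graph with edge lengths and `0 < xL < xR`.
The volume of `G` collapsed to `[xL, xR]` (edges inside merged classes disappear and
lengths are clipped to at most `xR`) is at most
`2 · Σ_{e : l(e) > xL/n} w(e) · min(l(e), xR)`. -/
theorem stmt10 (w l : V → V → ℝ) (hw : ∀ u v, 0 ≤ w u v) (hl : ∀ u v, 0 ≤ l u v)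
    (heul : IsEulerian w) (xL xR : ℝ) (hxL : 0 < xL) (hxLR : xL < xR) :
    (∑ u, ∑ v, if ¬ Merged w l xL u v then w u v * min (l u v) xR else 0) ≤
      2 * ∑ u, ∑ v,
        if xL / (Fintype.card V) < l u v then w u v * min (l u v) xR else 0 := by
  classical
  cases isEmpty_or_nonempty V with
  | inl h => simp
  | inr h =>
  set n : ℝ := (Fintype.card V : ℝ) with hn
  have hcard : 0 < Fintype.card V := Fintype.card_pos
  have hn0 : (0:ℝ) < n := by rw [hn]; exact_mod_cast hcard
  have hn1 : (1:ℝ) ≤ n := by rw [hn]; exact_mod_cast Nat.one_le_iff_ne_zero.mpr hcard.ne'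
  have hxRpos : 0 < xR := hxL.trans hxLR
  have hxLn_le : xL / n ≤ xL := by
    rw [div_le_iff₀ hn0]; nlinarith
  have hmin0 : ∀ u v : V, 0 ≤ min (l u v) xR := fun u v => le_min (hl u v) hxRpos.le
  set Long : ℝ := ∑ u, ∑ v, if xL < l u v then w u v else 0 with hLong
  set R : ℝ := ∑ u, ∑ v, if xL / n < l u v then w u v * min (l u v) xR else 0 with hR
  set B : ℝ := ∑ u, ∑ v, if ¬ Merged w l xL u v ∧ l u v ≤ xL then w u v else 0 with hB
  set A : ℝ := ∑ u, ∑ v, if ¬ Merged w l xL u v ∧ l u v ≤ xL / n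
      then w u v * min (l u v) xR else 0 with hA
  have hRterm0 : ∀ u v : V,
      (0:ℝ) ≤ if xL / n < l u v then w u v * min (l u v) xR else 0 := by
    intro u v; split
    · exact mul_nonneg (hw u v) (hmin0 u v)
    · exact le_refl 0
  have hR0 : 0 ≤ R := by
    rw [hR]
    exact Finset.sum_nonneg fun u _ => Finset.sum_nonneg fun v _ => hRterm0 u v
  -- the cut lemma
  have cut : ∀ x : V,
      (∑ u, ∑ v, if ShortReach w l xL u x ∧ ¬ ShortReach w l xL v x then w u v else 0)
        ≤ Long := by
    intro x
    set P : V → Prop := fun z => ShortReach w l xL z x with hP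
    have heq : ∑ v, (if P v then ∑ u, w u v else 0)
        = ∑ v, (if P v then ∑ u, w v u else 0) := by
      apply Finset.sum_congr rfl
      intro v _
      rw [heul v]
    have hsplit_in : ∀ v : V, (if P v then ∑ u, w u v else 0)
        = (∑ u, if P u ∧ P v then w u v else 0)
          + ∑ u, if ¬ P u ∧ P v then w u v else 0 := by
      intro v
      by_cases hv : P v
      · simp only [hv, and_true, if_true]
        rw [← Finset.sum_add_distrib]
        apply Finset.sum_congr rfl
        intro u _
        by_cases hu : P u <;> simp [hu]
      · simp [hv]
    have hsplit_out : ∀ v : V, (if P v then ∑ u, w v u else 0)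
        = (∑ u, if P v ∧ P u then w v u else 0)
          + ∑ u, if P v ∧ ¬ P u then w v u else 0 := by
      intro v
      by_cases hv : P v
      · simp only [hv, true_and, if_true]
        rw [← Finset.sum_add_distrib]
        apply Finset.sum_congr rfl
        intro u _
        by_cases hu : P u <;> simp [hu]
      · simp [hv]
    have hin : (∑ v, ∑ u, if P u ∧ P v then w u v else 0)
        = ∑ v, ∑ u, if P v ∧ P u then w v u else 0 := by
      rw [Finset.sum_comm]
    have hcross : (∑ v, ∑ u, if P v ∧ ¬ P u then w v u else 0)
        = ∑ v, ∑ u, if ¬ P u ∧ P v then w u v else 0 := by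
      have h1 : ∑ v, (if P v then ∑ u, w u v else 0)
          = (∑ v, ∑ u, if P u ∧ P v then w u v else 0)
            + ∑ v, ∑ u, if ¬ P u ∧ P v then w u v else 0 := by
        rw [← Finset.sum_add_distrib]
        exact Finset.sum_congr rfl fun v _ => hsplit_in v
      have h2 : ∑ v, (if P v then ∑ u, w v u else 0)
          = (∑ v, ∑ u, if P v ∧ P u then w v u else 0)
            + ∑ v, ∑ u, if P v ∧ ¬ P u then w v u else 0 := by
        rw [← Finset.sum_add_distrib]
        exact Finset.sum_congr rfl fun v _ => hsplit_out v
      rw [h1, h2, hin] at heq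
      linarith
    -- the goal's double sum equals ∑ v ∑ u, if P v ∧ ¬ P u then w v u else 0
    have hgoal_eq : (∑ u, ∑ v, if P u ∧ ¬ P v then w u v else 0)
        = ∑ v, ∑ u, if P v ∧ ¬ P u then w v u else 0 := rfl
    rw [hgoal_eq, hcross]
    calc (∑ v, ∑ u, if ¬ P u ∧ P v then w u v else 0)
        ≤ ∑ v, ∑ u, if xL < l u v then w u v else 0 := by
          apply Finset.sum_le_sum; intro v _
          apply Finset.sum_le_sum; intro u _
          by_cases hc : ¬ P u ∧ P v
          · rw [if_pos hc]
            split
            · exact le_refl _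
            · rename_i hlong
              push_neg at hlong
              by_contra hwpos
              push_neg at hwpos
              exact hc.1 (Relation.ReflTransGen.head ⟨hwpos, hlong⟩ hc.2)
          · rw [if_neg hc]
            split
            · exact hw u v
            · exact le_refl 0
      _ = Long := by rw [hLong, Finset.sum_comm]
  -- B is bounded by n * Long via the cuts at each vertex
  have hB_le : B ≤ n * Long := by
    have step1 : B ≤ ∑ x : V,
        ∑ u, ∑ v, if ShortReach w l xL u x ∧ ¬ ShortReach w l xL v x then w u v else 0 := by
      rw [hB]
      rw [Finset.sum_comm (s := univ) (t := univ)
        (f := fun x u => ∑ v, if ShortReach w l xL u x ∧ ¬ ShortReach w l xL v x then w u v else 0)]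
      apply Finset.sum_le_sum; intro u _
      rw [Finset.sum_comm (s := univ) (t := univ)
        (f := fun x v => if ShortReach w l xL u x ∧ ¬ ShortReach w l xL v x then w u v else 0)]
      apply Finset.sum_le_sum; intro v _
      -- termwise: pick x = u
      have hterm0 : ∀ x ∈ (univ : Finset V),
          (0:ℝ) ≤ if ShortReach w l xL u x ∧ ¬ ShortReach w l xL v x then w u v else 0 := by
        intro x _; split
        · exact hw u v
        · exact le_refl 0
      by_cases hc : ¬ Merged w l xL u v ∧ l u v ≤ xL
      · rw [if_pos hc]
        rcases le_or_gt (w u v) 0 with hw0 | hwpos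
        · exact le_trans hw0 (Finset.sum_nonneg hterm0)
        · have hsr : ShortReach w l xL u v :=
            Relation.ReflTransGen.single ⟨hwpos, hc.2⟩
          have hnsr : ¬ ShortReach w l xL v u := fun hvu => hc.1 ⟨hsr, hvu⟩
          have := Finset.single_le_sum hterm0 (Finset.mem_univ u)
          rwa [if_pos ⟨Relation.ReflTransGen.refl, hnsr⟩] at this
      · rw [if_neg hc]
        exact Finset.sum_nonneg hterm0
    calc B ≤ _ := step1
      _ ≤ ∑ _x : V, Long := Finset.sum_le_sum fun x _ => cut x
      _ = n * Long := by
          rw [Finset.sum_const, Finset.card_univ, nsmul_eq_mul, hn]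
  -- A ≤ (xL / n) * B
  have hA_le : A ≤ (xL / n) * B := by
    rw [hA, hB, Finset.mul_sum]
    apply Finset.sum_le_sum; intro u _
    rw [Finset.mul_sum]
    apply Finset.sum_le_sum; intro v _
    by_cases hc : ¬ Merged w l xL u v ∧ l u v ≤ xL / n
    · rw [if_pos hc, if_pos ⟨hc.1, le_trans hc.2 hxLn_le⟩]
      have hminl : min (l u v) xR = l u v :=
        min_eq_left (le_trans hc.2 (hxLn_le.trans hxLR.le))
      rw [hminl, mul_comm (xL / n)]
      exact mul_le_mul_of_nonneg_left (le_trans hc.2 (le_refl _)) (hw u v)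
    · rw [if_neg hc]
      split
      · exact mul_nonneg (div_nonneg hxL.le hn0.le) (hw u v)
      · simp
  -- xL * Long ≤ R
  have hLong_le : xL * Long ≤ R := by
    rw [hLong, hR, Finset.mul_sum]
    apply Finset.sum_le_sum; intro u _
    rw [Finset.mul_sum]
    apply Finset.sum_le_sum; intro v _
    by_cases hc : xL < l u v
    · rw [if_pos hc, if_pos (lt_of_le_of_lt hxLn_le hc)]
      have hminxL : xL ≤ min (l u v) xR := le_min hc.le hxLR.le
      calc xL * w u v = w u v * xL := mul_comm _ _
        _ ≤ w u v * min (l u v) xR := mul_le_mul_of_nonneg_left hminxL (hw u v)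
    · rw [if_neg hc, mul_zero]
      exact hRterm0 u v
  -- split the LHS
  have hsplit : (∑ u, ∑ v, if ¬ Merged w l xL u v then w u v * min (l u v) xR else 0)
      ≤ A + R := by
    rw [hA, hR, ← Finset.sum_add_distrib]
    apply Finset.sum_le_sum; intro u _
    rw [← Finset.sum_add_distrib]
    apply Finset.sum_le_sum; intro v _
    by_cases hm : ¬ Merged w l xL u v
    · rw [if_pos hm]
      rcases le_or_gt (l u v) (xL / n) with hle | hgt
      · rw [if_pos ⟨hm, hle⟩, if_neg (not_lt.mpr hle)]
        simp
      · rw [if_neg (fun hc => absurd hc.2 (not_le.mpr hgt)), if_pos hgt]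
        simp
    · rw [if_neg hm]
      have : (0:ℝ) ≤ if ¬ Merged w l xL u v ∧ l u v ≤ xL / n
          then w u v * min (l u v) xR else 0 := by
        split
        · exact mul_nonneg (hw u v) (hmin0 u v)
        · exact le_refl 0
      linarith [hRterm0 u v]
  -- combine
  have hA_le' : A ≤ R := by
    calc A ≤ (xL / n) * B := hA_le
      _ ≤ (xL / n) * (n * Long) := by
          apply mul_le_mul_of_nonneg_left hB_le (div_nonneg hxL.le hn0.le)
      _ = xL * Long := by field_simp
      _ ≤ R := hLong_le
  have hfinal : (∑ u, ∑ v, if ¬ Merged w l xL u v then w u v * min (l u v) xR else 0)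
      ≤ 2 * R := by linarith
  calc (∑ u, ∑ v, if ¬ Merged w l xL u v then w u v * min (l u v) xR else 0)
      ≤ 2 * R := hfinal
    _ = 2 * ∑ u, ∑ v, if xL / (Fintype.card V) < l u v
          then w u v * min (l u v) xR else 0 := by rw [hR]
end

section
/- Let s : ℤ → ℝ satisfy s_{i+k} = s_i − L for all i (k ∈ ℕ, L > 0), and let a : ℤ → Fin n be k-periodic. Define c_i = a_j where j is the minimal index minimizing s over {q : q ≤ i}, and define f(y) = a_j where j is the minimal index with s_j ≤ y (assuming these minima exist). Then c is k-periodic and f is L-periodic, and for any i ∈ ℤ and y ∈ ℝ, the number of value changes in the sequence c_i, c_{i+1}, …, c_{i+k} equals the number of value changes of f on the interval [y, y+L]. -/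
open Finset

private lemma winStep (k : ℕ) (B : ℤ → Prop) [DecidablePred B]
    (hB : ∀ x : ℤ, B (x + (k : ℤ)) ↔ B x) (u : ℤ) :
    ((Finset.Ico u (u + (k : ℤ))).filter B).card
      = ((Finset.Ico (u + 1) (u + 1 + (k : ℤ))).filter B).card := by
  rcases Nat.eq_zero_or_pos k with h0 | hk
  · subst h0; simp
  have hkz : (0 : ℤ) < (k : ℤ) := by exact_mod_cast hk
  have h1 : Finset.Ico u (u + (k : ℤ)) = insert u (Finset.Ico (u + 1) (u + (k : ℤ))) := by
    ext m; simp only [Finset.mem_Ico, Finset.mem_insert]; omega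
  have h2 : Finset.Ico (u + 1) (u + 1 + (k : ℤ))
      = insert (u + (k : ℤ)) (Finset.Ico (u + 1) (u + (k : ℤ))) := by
    ext m; simp only [Finset.mem_Ico, Finset.mem_insert]; omega
  rw [h1, h2, Finset.filter_insert, Finset.filter_insert]
  have hmem1 : u ∉ (Finset.Ico (u + 1) (u + (k : ℤ))).filter B := by
    simp only [Finset.mem_filter, Finset.mem_Ico]
    rintro ⟨⟨h, _⟩, _⟩; omega
  have hmem2 : u + (k : ℤ) ∉ (Finset.Ico (u + 1) (u + (k : ℤ))).filter B := by
    simp only [Finset.mem_filter, Finset.mem_Ico]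
    rintro ⟨⟨_, h⟩, _⟩; omega
  by_cases hBu : B u
  · rw [if_pos hBu, if_pos ((hB u).mpr hBu), Finset.card_insert_of_notMem hmem1,
      Finset.card_insert_of_notMem hmem2]
  · rw [if_neg hBu, if_neg (fun h => hBu ((hB u).mp h))]

private lemma winCard (k : ℕ) (B : ℤ → Prop) [DecidablePred B]
    (hB : ∀ x : ℤ, B (x + (k : ℤ)) ↔ B x) (u v : ℤ) :
    ((Finset.Ico u (u + (k : ℤ))).filter B).card
      = ((Finset.Ico v (v + (k : ℤ))).filter B).card := by
  have key : ∀ t : ℤ, ∀ w : ℤ, ((Finset.Ico w (w + (k : ℤ))).filter B).card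
      = ((Finset.Ico (w + t) (w + t + (k : ℤ))).filter B).card := by
    intro t
    induction t using Int.induction_on with
    | zero => intro w; norm_num
    | succ n ih =>
        intro w
        have e : w + ((n : ℤ) + 1) = (w + (n : ℤ)) + 1 := by ring
        rw [e]
        exact (ih w).trans (winStep k B hB (w + (n : ℤ)))
    | pred n ih =>
        intro w
        have e : w + (-(n : ℤ) - 1) + 1 = w + (-(n : ℤ)) := by ring
        have h := winStep k B hB (w + (-(n : ℤ) - 1))
        rw [e] at h
        exact (ih w).trans h.symm
  have h := key (v - u) u
  have e : u + (v - u) = v := by ring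
  rwa [e] at h

/-- Let `s : ℤ → ℝ` satisfy `s (i+k) = s i − L` and let `a : ℤ → Fin n` be `k`-periodic.
Let `j i` be the minimal index minimizing `s` over `{q : q ≤ i}` and set `c i = a (j i)`;
let `J y` be the minimal index with `s (J y) ≤ y` and set `f y = a (J y)`.
Then `c` is `k`-periodic, `f` is `L`-periodic, and for any `i : ℤ` and `y : ℝ`, the
number of value changes of the sequence `c i, c (i+1), …, c (i+k)` equals the number
of value changes of `f` on the interval `[y, y+L]` (counted as the points of `(y, y+L]`
at which `f` is not locally constant on the left). -/
theorem stmt11 (k n : ℕ) (hk : 0 < k) (L : ℝ) (hL : 0 < L)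
    (s : ℤ → ℝ) (hs : ∀ i : ℤ, s (i + k) = s i - L)
    (a : ℤ → Fin n) (ha : ∀ i : ℤ, a (i + k) = a i)
    (j : ℤ → ℤ)
    (hj : ∀ i : ℤ, j i ≤ i ∧ (∀ q ≤ i, s (j i) ≤ s q) ∧ (∀ q ≤ i, s q ≤ s (j i) → j i ≤ q))
    (J : ℝ → ℤ)
    (hJ : ∀ y : ℝ, s (J y) ≤ y ∧ ∀ q : ℤ, s q ≤ y → J y ≤ q)
    (c : ℤ → Fin n) (hc : ∀ i, c i = a (j i))
    (f : ℝ → Fin n) (hf : ∀ y, f y = a (J y)) :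
    (∀ i : ℤ, c (i + k) = c i) ∧ (∀ y : ℝ, f (y + L) = f y) ∧
    (∀ (i : ℤ) (y : ℝ),
      ((Finset.Ico i (i + k)).filter (fun m => c m ≠ c (m + 1))).card =
        Nat.card {z : ℝ | z ∈ Set.Ioc y (y + L) ∧
          ∀ δ > (0 : ℝ), ∃ z' ∈ Set.Ioo (z - δ) z, f z' ≠ f z}) := by
  classical
  have hkz : (0 : ℤ) < (k : ℤ) := by exact_mod_cast hk
  -- uniqueness of j
  have hjuniq : ∀ (i x : ℤ), x ≤ i → (∀ q ≤ i, s x ≤ s q) →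
      (∀ q ≤ i, s q ≤ s x → x ≤ q) → j i = x := by
    intro i x h1 h2 h3
    obtain ⟨hj1, hj2, hj3⟩ := hj i
    have hxj : x ≤ j i := h3 (j i) hj1 (hj2 x h1)
    have hjx : j i ≤ x := hj3 x h1 (h2 (j i) hj1)
    omega
  have hJuniq : ∀ (y : ℝ) (x : ℤ), s x ≤ y → (∀ q : ℤ, s q ≤ y → x ≤ q) → J y = x := by
    intro y x h1 h2
    obtain ⟨hJ1, hJ2⟩ := hJ y
    have h3 := h2 _ hJ1
    have h4 := hJ2 x h1
    omega
  have hs' : ∀ i : ℤ, s (i - k) = s i + L := by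
    intro i
    have h := hs (i - k)
    rw [sub_add_cancel] at h
    linarith
  have hjk : ∀ i : ℤ, j (i + k) = j i + k := by
    intro i
    obtain ⟨hj1, hj2, hj3⟩ := hj i
    refine hjuniq (i + k) (j i + k) (by omega) ?_ ?_
    · intro q hq
      have h1 : s (j i + k) = s (j i) - L := hs (j i)
      have h2 : s (q - k) = s q + L := hs' q
      have h3 := hj2 (q - k) (by omega)
      linarith
    · intro q hq hsq
      have h1 : s (j i + k) = s (j i) - L := hs (j i)
      have h2 : s (q - k) = s q + L := hs' q
      have h3 : s (q - k) ≤ s (j i) := by linarith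
      have := hj3 (q - k) (by omega) h3
      omega
  have hJL : ∀ y : ℝ, J (y + L) = J y - k := by
    intro y
    obtain ⟨hJ1, hJ2⟩ := hJ y
    refine hJuniq (y + L) (J y - k) ?_ ?_
    · have h := hs' (J y)
      linarith
    · intro q hq
      have h1 : s (q + k) = s q - L := hs q
      have h2 : s (q + k) ≤ y := by linarith
      have := hJ2 _ h2
      omega
  -- records
  have hjrec : ∀ i : ℤ, j (j i) = j i := by
    intro i
    obtain ⟨hj1, hj2, hj3⟩ := hj i
    exact hjuniq (j i) (j i) le_rfl (fun q hq => hj2 q (hq.trans hj1))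
      (fun q hq h => hj3 q (hq.trans hj1) h)
  have hrecs : ∀ r q : ℤ, j r = r → q < r → s r < s q := by
    intro r q hr hq
    obtain ⟨h1, h2, h3⟩ := hj r
    rw [hr] at h2 h3
    by_contra h
    push_neg at h
    have := h3 q (by omega) h
    omega
  have hrecle : ∀ r m : ℤ, j r = r → r ≤ m → r ≤ j m := by
    intro r m hr hrm
    obtain ⟨h1, h2, h3⟩ := hj m
    by_contra h
    push_neg at h
    have hs1 : s (j m) ≤ s r := h2 r hrm
    obtain ⟨g1, g2, g3⟩ := hj r
    rw [hr] at g3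
    have := g3 (j m) (by omega) hs1
    omega
  have hJrec : ∀ y : ℝ, j (J y) = J y := by
    intro y
    obtain ⟨hJ1, hJ2⟩ := hJ y
    refine hjuniq (J y) (J y) le_rfl ?_ ?_
    · intro q hq
      by_contra h
      push_neg at h
      have h2 : s q ≤ y := le_of_lt (lt_of_lt_of_le h hJ1)
      have h3 := hJ2 q h2
      have h4 : q = J y := le_antisymm hq h3
      rw [h4] at h
      exact lt_irrefl _ h
    · intro q hq hsq
      exact hJ2 q (le_trans hsq hJ1)
  have hJs : ∀ r : ℤ, j r = r → J (s r) = r := by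
    intro r hr
    refine hJuniq (s r) r le_rfl ?_
    intro q hq
    by_contra h
    push_neg at h
    have := hrecs r q hr h
    linarith
  have hJmono : ∀ (y : ℝ) (q : ℤ), s q ≤ y → J y ≤ q := fun y q h => (hJ y).2 q h
  -- the "bad record" predicate
  set B : ℤ → Prop := fun r => j r = r ∧ a r ≠ a (j (r - 1)) with hBdef
  have hBper : ∀ x : ℤ, B (x + (k : ℤ)) ↔ B x := by
    intro x
    have h1 : j (x + k) = j x + k := hjk x
    have h2 : j (x + (k : ℤ) - 1) = j (x - 1) + k := by
      have h := hjk (x - 1)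
      rw [show x - 1 + (k : ℤ) = x + (k : ℤ) - 1 by ring] at h
      exact h
    simp only [hBdef]
    rw [h1, h2, ha x, ha (j (x - 1))]
    constructor
    · rintro ⟨u, v⟩; exact ⟨by omega, v⟩
    · rintro ⟨u, v⟩; exact ⟨by omega, v⟩
  -- step structure of j
  have hstep : ∀ m : ℤ, j (m + 1) = j m ∨ j (m + 1) = m + 1 := by
    intro m
    obtain ⟨h1, h2, h3⟩ := hj m
    by_cases hcmp : s (j m) ≤ s (m + 1)
    · left
      refine hjuniq (m + 1) (j m) (by omega) ?_ ?_
      · intro q hq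
        rcases eq_or_lt_of_le hq with h | h
        · rw [h]; exact hcmp
        · exact h2 q (by omega)
      · intro q hq hsq
        rcases eq_or_lt_of_le hq with h | h
        · omega
        · exact h3 q (by omega) hsq
    · right
      push_neg at hcmp
      refine hjuniq (m + 1) (m + 1) le_rfl ?_ ?_
      · intro q hq
        rcases eq_or_lt_of_le hq with h | h
        · rw [h]
        · exact le_of_lt (lt_of_lt_of_le hcmp (h2 q (by omega)))
      · intro q hq hsq
        rcases eq_or_lt_of_le hq with h | h
        · omega
        · exfalso
          have := h2 q (by omega)
          linarith
  have hchange : ∀ m : ℤ, (c m ≠ c (m + 1)) ↔ B (m + 1) := by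
    intro m
    have hm1 : m + 1 - 1 = m := by ring
    rcases hstep m with h | h
    · constructor
      · intro hne
        exfalso
        apply hne
        rw [hc, hc, h]
      · rintro ⟨hb1, _⟩
        exfalso
        have := (hj m).1
        omega
    · constructor
      · intro hne
        refine ⟨h, ?_⟩
        rw [hm1]
        rw [hc, hc, h] at hne
        exact fun e => hne e.symm
      · rintro ⟨hb1, hb2⟩
        rw [hm1] at hb2
        rw [hc, hc, h]
        exact fun e => hb2 e.symm
  refine ⟨?_, ?_, ?_⟩
  · intro i
    rw [hc, hc, hjk, ha]
  · intro y
    rw [hf, hf, hJL]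
    have h := ha (J y - k)
    rw [sub_add_cancel] at h
    exact h.symm
  · intro i y
    set r0 := J y with hr0
    have hr0rec : j r0 = r0 := hJrec y
    have hr0k : j (r0 - k) = r0 - k := by
      have h := hjk (r0 - k)
      rw [sub_add_cancel] at h
      omega
    have hJyL : J (y + L) = r0 - k := hJL y
    set F := (Finset.Ioc (r0 - (k : ℤ)) r0).filter B with hF
    set φ : ℤ → ℝ := fun r => s (j (r - 1)) with hphi
    -- key set equality
    have hSet : {z : ℝ | z ∈ Set.Ioc y (y + L) ∧
        ∀ δ > (0 : ℝ), ∃ z' ∈ Set.Ioo (z - δ) z, f z' ≠ f z} = ↑(F.image φ) := by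
      ext z
      simp only [Set.mem_setOf_eq, Finset.coe_image, Set.mem_image, Finset.mem_coe,
        Set.mem_Ioc, Set.mem_Ioo]
      constructor
      · rintro ⟨⟨hzy, hzyL⟩, hz2⟩
        set p := J z with hp
        have hprec : j p = p := hJrec z
        have hsple : s p ≤ z := (hJ z).1
        -- s p = z
        have hsp : s p = z := by
          by_contra hne
          have hlt : s p < z := lt_of_le_of_ne hsple hne
          obtain ⟨z', ⟨hz'1, hz'2⟩, hfne⟩ := hz2 (z - s p) (by linarith)
          have h1 : J z' ≤ p := hJmono z' p (by linarith)
          have h2 : p ≤ J z' := hJmono z (J z') (le_of_lt (lt_of_le_of_lt (hJ z').1 hz'2))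
          apply hfne
          rw [hf, hf, ← hp, le_antisymm h1 h2]
        -- p is in the window
        have hpge : r0 - k ≤ p := by
          have := hJmono (y + L) p (by rw [hsp]; exact hzyL)
          omega
        have hplt : p < r0 := by
          by_contra hge
          push_neg at hge
          have hle : s p ≤ y := by
            rcases eq_or_lt_of_le hge with h | h
            · rw [← h]; exact (hJ y).1
            · exact le_of_lt (lt_of_lt_of_le (hrecs p r0 hprec h) (hJ y).1)
          linarith
        -- next record after p
        obtain ⟨r, ⟨hrgt, hrrec⟩, hrmin⟩ :=
          Int.exists_least_of_bdd (P := fun q => p < q ∧ j q = q)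
            ⟨p + 1, fun q hq => by omega⟩
            ⟨p + k, by
              constructor
              · omega
              · rw [hjk, hprec]⟩
        have hjr1 : j (r - 1) = p := by
          have h1 : p ≤ j (r - 1) := hrecle p (r - 1) hprec (by omega)
          have h2 : j (j (r - 1)) = j (r - 1) := hjrec (r - 1)
          have h3 : j (r - 1) ≤ r - 1 := (hj (r - 1)).1
          rcases eq_or_lt_of_le h1 with h | h
          · omega
          · exfalso
            have := hrmin (j (r - 1)) ⟨h, h2⟩
            omega
        have hrle : r ≤ r0 := hrmin r0 ⟨hplt, hr0rec⟩
        -- the value change: a r ≠ a p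
        have hsr : s r < z := by rw [← hsp]; exact hrecs r p hrrec hrgt
        obtain ⟨z', ⟨hz'1, hz'2⟩, hfne⟩ := hz2 (z - s r) (by linarith)
        have hJz' : J z' = r := by
          have h1 : J z' ≤ r := hJmono z' r (by linarith)
          have h2 : s (J z') ≤ z' := (hJ z').1
          have hrecJ : j (J z') = J z' := hJrec z'
          have h3 : p < J z' := by
            rcases lt_trichotomy (J z') p with h | h | h
            · exfalso
              have := hrecs p (J z') hprec h
              linarith
            · exfalso
              rw [h, hsp] at h2
              linarith
            · exact h
          have := hrmin (J z') ⟨h3, hrecJ⟩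
          omega
        have hane : a r ≠ a p := by
          intro e
          apply hfne
          rw [hf, hf, hJz', ← hp, e]
        refine ⟨r, ?_, ?_⟩
        · rw [hF, Finset.mem_filter, Finset.mem_Ioc]
          refine ⟨⟨by omega, hrle⟩, hrrec, ?_⟩
          rw [hjr1]
          exact hane
        · rw [hphi]
          simp only
          rw [hjr1, hsp]
      · rintro ⟨r, hrF, rfl⟩
        rw [hF, Finset.mem_filter, Finset.mem_Ioc] at hrF
        obtain ⟨⟨hrlo, hrhi⟩, hrrec, hrne⟩ := hrF
        set p := j (r - 1) with hp
        have hprec : j p = p := hjrec (r - 1)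
        have hpler : p ≤ r - 1 := (hj (r - 1)).1
        have hpge : r0 - k ≤ p := hrecle (r0 - k) (r - 1) hr0k (by omega)
        have hplt : p < r0 := by omega
        have hsrp : s r < s p := hrecs r p hrrec (by omega)
        have hJz : J (s p) = p := hJs p hprec
        have hzle : s p ≤ y + L := by
          rcases eq_or_lt_of_le hpge with h | h
          · rw [← h, ← hJyL]
            exact (hJ (y + L)).1
          · have h2 := hrecs p (r0 - k) hprec h
            have h3 : s (r0 - k) ≤ y + L := by rw [← hJyL]; exact (hJ (y + L)).1
            linarith
        have hzgt : y < s p := by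
          by_contra hle
          push_neg at hle
          have := hJmono y p hle
          omega
        refine ⟨⟨hzgt, hzle⟩, ?_⟩
        intro δ hδ
        set M := max (s r) (s p - δ) with hM
        have hMlt : M < s p := by
          rw [hM]
          apply max_lt hsrp (by linarith)
        set z' := (M + s p) / 2 with hz'
        have hz'lt : z' < s p := by rw [hz']; linarith
        have hz'gtM : M < z' := by rw [hz']; linarith
        have hz'ge : s r ≤ z' := le_of_lt (lt_of_le_of_lt (le_max_left _ _) hz'gtM)
        have hz'gtδ : s p - δ < z' := lt_of_le_of_lt (le_max_right _ _) hz'gtM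
        have hJz' : J z' = r := by
          have h1 : J z' ≤ r := hJmono z' r hz'ge
          have h2 : s (J z') ≤ z' := (hJ z').1
          have hrecJ : j (J z') = J z' := hJrec z'
          have h3 : p < J z' := by
            rcases lt_trichotomy (J z') p with h | h | h
            · exfalso
              have := hrecs p (J z') hprec h
              linarith
            · exfalso
              rw [h] at h2
              linarith
            · exact h
          -- no records strictly between p and r
          by_contra hne
          have h4 : J z' ≤ r - 1 := by omega
          have h5 : J z' ≤ j (r - 1) := hrecle (J z') (r - 1) hrecJ h4
          omega
        refine ⟨z', ⟨hz'gtδ, hz'lt⟩, ?_⟩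
        rw [hf, hf, hJz', hJz]
        exact fun e => hrne e
    -- injectivity of φ on F
    have hinj : Set.InjOn φ ↑F := by
      intro r1 h1 r2 h2 he
      rw [hF, Finset.coe_filter, Set.mem_setOf_eq, Finset.mem_Ioc] at h1 h2
      obtain ⟨_, hr1rec, _⟩ := h1
      obtain ⟨_, hr2rec, _⟩ := h2
      have hrec1 : j (j (r1 - 1)) = j (r1 - 1) := hjrec (r1 - 1)
      have hrec2 : j (j (r2 - 1)) = j (r2 - 1) := hjrec (r2 - 1)
      have hpeq : j (r1 - 1) = j (r2 - 1) := by
        rcases lt_trichotomy (j (r1 - 1)) (j (r2 - 1)) with h | h | h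
        · exfalso
          have := hrecs (j (r2 - 1)) (j (r1 - 1)) hrec2 h
          rw [hphi] at he
          simp only at he
          linarith
        · exact h
        · exfalso
          have := hrecs (j (r1 - 1)) (j (r2 - 1)) hrec1 h
          rw [hphi] at he
          simp only at he
          linarith
      rcases lt_trichotomy r1 r2 with h | h | h
      · exfalso
        have h1 := hrecle r1 (r2 - 1) hr1rec (by omega)
        have h2 : j (r1 - 1) ≤ r1 - 1 := (hj (r1 - 1)).1
        omega
      · exact h
      · exfalso
        have h1 := hrecle r2 (r1 - 1) hr2rec (by omega)
        have h2 : j (r2 - 1) ≤ r2 - 1 := (hj (r2 - 1)).1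
        omega
    rw [hSet, Nat.card_coe_set_eq, Set.ncard_coe_finset,
      Finset.card_image_of_injOn hinj]
    -- now: change count = F.card
    have hcount1 : ((Finset.Ico i (i + (k : ℤ))).filter (fun m => c m ≠ c (m + 1))).card
        = ((Finset.Ico (i + 1) (i + 1 + (k : ℤ))).filter B).card := by
      refine Finset.card_nbij' (i := fun m => m + 1) (j := fun m => m - 1) ?_ ?_ ?_ ?_
      · intro m hm
        simp only [Finset.mem_coe, Finset.mem_filter, Finset.mem_Ico] at hm ⊢
        exact ⟨by omega, (hchange m).mp hm.2⟩
      · intro m hm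
        simp only [Finset.mem_coe, Finset.mem_filter, Finset.mem_Ico] at hm ⊢
        refine ⟨by omega, ?_⟩
        have hb : B (m - 1 + 1) := by rw [show m - 1 + 1 = m by ring]; exact hm.2
        exact (hchange (m - 1)).mpr hb
      · intro m _; dsimp only; omega
      · intro m _; dsimp only; omega
    have hIoc : Finset.Ioc (r0 - (k : ℤ)) r0
        = Finset.Ico (r0 - (k : ℤ) + 1) (r0 - (k : ℤ) + 1 + (k : ℤ)) := by
      ext m
      simp only [Finset.mem_Ioc, Finset.mem_Ico]
      omega
    rw [hcount1, hF, hIoc]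
    exact winCard k B hBper (i + 1) (r0 - (k : ℤ) + 1)
end

section
/- Let x₀,…,x_{n−1} be independent exponential random variables with rate β, let t : ℤ → ℝ satisfy t_{i+k} = t_i − L, let a : ℤ → Fin n be k-periodic, and set s_i = t_i − x_{a_i}. Define f(y) = a_j where j is the minimal index with s_j ≤ y. Then for every y ∈ ℝ and ε > 0, the probability that f is not constant on [y, y+ε] is at most O(βε). -/
open MeasureTheory ProbabilityTheory

open MeasureTheory ProbabilityTheory Real Set

namespace Stmt12Aux

lemma expMeasure_Iic {β : ℝ} (hβ : 0 < β) (b : ℝ) :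
    expMeasure β (Iic b) = ENNReal.ofReal (if 0 ≤ b then 1 - Real.exp (-(β * b)) else 0) := by
  rw [expMeasure, gammaMeasure, withDensity_apply _ measurableSet_Iic]
  have h : gammaPDF 1 β = exponentialPDF β := rfl
  rw [h, lintegral_exponentialPDF_eq_antiDeriv hβ]

lemma expMeasure_Iio {β : ℝ} (hβ : 0 < β) (b : ℝ) :
    expMeasure β (Iio b) = ENNReal.ofReal (if 0 ≤ b then 1 - Real.exp (-(β * b)) else 0) := by
  have hsing : expMeasure β {b} = 0 := by
    rw [expMeasure, gammaMeasure, withDensity_apply _ (measurableSet_singleton b)]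
    rw [setLIntegral_measure_zero _ _ (Real.volume_singleton)]
  have h1 : expMeasure β (Iic b) ≤ expMeasure β (Iio b) := by
    calc expMeasure β (Iic b) = expMeasure β (Iio b ∪ {b}) := by rw [Iio_union_right]
    _ ≤ expMeasure β (Iio b) + expMeasure β {b} := measure_union_le _ _
    _ = expMeasure β (Iio b) := by rw [hsing, add_zero]
  have h2 := measure_mono (Iio_subset_Iic_self (a := b)) (μ := expMeasure β)
  rw [← le_antisymm h1 h2, expMeasure_Iic hβ]

lemma expMeasure_key {β ε : ℝ} (hβ : 0 < β) (hε : 0 < ε) (c : ℝ) :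
    expMeasure β (Ico c (c + ε)) ≤
      ENNReal.ofReal (1 - Real.exp (-(β * ε))) * expMeasure β (Ici c) := by
  haveI : IsProbabilityMeasure (expMeasure β) := isProbabilityMeasure_expMeasure hβ
  have hIci : ∀ u : ℝ, expMeasure β (Ici u) =
      1 - ENNReal.ofReal (if 0 ≤ u then 1 - Real.exp (-(β * u)) else 0) := by
    intro u
    rw [← expMeasure_Iio hβ u, ← measure_univ (μ := expMeasure β), ← Iio_union_Ici (a := u),
      measure_union (by simp [disjoint_left]) measurableSet_Ici]
    simp [ENNReal.add_sub_cancel_left (measure_ne_top _ _)]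
  rcases le_or_gt c 0 with hc | hc
  · have h1 : expMeasure β (Ico c (c + ε)) ≤ expMeasure β (Iio (c + ε)) :=
      measure_mono Ico_subset_Iio_self
    have h2 : expMeasure β (Iio (c + ε)) ≤ ENNReal.ofReal (1 - Real.exp (-(β * ε))) := by
      rw [expMeasure_Iio hβ]
      split_ifs with h
      · apply ENNReal.ofReal_le_ofReal
        have : β * (c + ε) ≤ β * ε := by nlinarith
        have := Real.exp_le_exp.mpr (neg_le_neg this)
        linarith
      · simp
    have h3 : expMeasure β (Ici c) = 1 := by
      rw [hIci c]
      split_ifs with h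
      · have : c = 0 := le_antisymm hc h
        simp [this]
      · simp
    rw [h3, mul_one]
    exact h1.trans h2
  · -- 0 < c
    have hc' : 0 ≤ c := hc.le
    have hce : 0 ≤ c + ε := by linarith
    have hexp1 : Real.exp (-(β * c)) ≤ 1 := by
      rw [Real.exp_le_one_iff]; nlinarith
    have hIoc : expMeasure β (Iio c) + expMeasure β (Ico c (c + ε)) =
        expMeasure β (Iio (c + ε)) := by
      rw [← measure_union (by simp [disjoint_left]; intros; linarith) measurableSet_Ico,
        Iio_union_Ico_eq_Iio (by linarith)]
    have heq : expMeasure β (Ico c (c + ε)) =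
        ENNReal.ofReal (Real.exp (-(β * c)) - Real.exp (-(β * (c + ε)))) := by
      have hrw : expMeasure β (Iio (c + ε)) =
          expMeasure β (Iio c) + ENNReal.ofReal (Real.exp (-(β * c)) - Real.exp (-(β * (c + ε)))) := by
        rw [expMeasure_Iio hβ, expMeasure_Iio hβ, if_pos hce, if_pos hc',
          ← ENNReal.ofReal_add (by linarith) (by
            have : β * c ≤ β * (c + ε) := by nlinarith
            have := Real.exp_le_exp.mpr (neg_le_neg this)
            linarith)]
        ring_nf
      rw [hrw] at hIoc
      exact (ENNReal.add_right_inj (measure_ne_top _ _)).mp hIoc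
    have hIcic : expMeasure β (Ici c) = ENNReal.ofReal (Real.exp (-(β * c))) := by
      rw [hIci c, if_pos hc']
      rw [← ENNReal.ofReal_one, ← ENNReal.ofReal_sub _ (by linarith)]
      norm_num
    have hexpe : Real.exp (-(β*ε)) ≤ 1 := by
      rw [Real.exp_le_one_iff]; nlinarith
    rw [heq, hIcic, ← ENNReal.ofReal_mul (by linarith)]
    apply ENNReal.ofReal_le_ofReal
    have : Real.exp (-(β * (c + ε))) = Real.exp (-(β*c)) * Real.exp (-(β*ε)) := by
      rw [← Real.exp_add]; ring_nf
    rw [this]; ring_nf; nlinarith [Real.exp_pos (-(β*c)), Real.exp_pos (-(β*ε))]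

end Stmt12Aux

open MeasureTheory ProbabilityTheory Real Set

namespace Stmt12Aux2

lemma core {Ω : Type*} [MeasurableSpace Ω] (P : Measure Ω) [IsProbabilityMeasure P]
    {E : Type*} [MeasurableSpace E] (W : Ω → E) (X : Ω → ℝ)
    (hW : Measurable W) (hX : Measurable X)
    (hind : IndepFun W X P) {β : ℝ} (hβ : 0 < β)
    (hmap : Measure.map X P = expMeasure β)
    (D : Set E) (hD : MeasurableSet D) (φ : E → ℝ) (hφ : Measurable φ)
    {ε : ℝ} (hε : 0 < ε) :
    P {ω | W ω ∈ D ∧ X ω ∈ Ico (φ (W ω)) (φ (W ω) + ε)}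
      ≤ ENNReal.ofReal (1 - Real.exp (-(β * ε))) * P {ω | W ω ∈ D ∧ φ (W ω) ≤ X ω} := by
  haveI : IsProbabilityMeasure (expMeasure β) := isProbabilityMeasure_expMeasure hβ
  have hprod : P.map (fun ω => (W ω, X ω)) = (P.map W).prod (expMeasure β) := by
    rw [← hmap]
    exact (indepFun_iff_map_prod_eq_prod_map_map hW.aemeasurable hX.aemeasurable).mp hind
  set C1 : Set (E × ℝ) := {p | p.1 ∈ D ∧ p.2 ∈ Ico (φ p.1) (φ p.1 + ε)} with hC1def
  set C2 : Set (E × ℝ) := {p | p.1 ∈ D ∧ φ p.1 ≤ p.2} with hC2def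
  have hC1 : MeasurableSet C1 := by
    have : C1 = (Prod.fst ⁻¹' D) ∩ {p : E × ℝ | φ p.1 ≤ p.2} ∩ {p : E × ℝ | p.2 < φ p.1 + ε} := by
      ext p; simp [hC1def, and_assoc]
    rw [this]
    exact (((hD.preimage measurable_fst).inter
      (measurableSet_le (hφ.comp measurable_fst) measurable_snd)).inter
      (measurableSet_lt measurable_snd ((hφ.comp measurable_fst).add measurable_const)))
  have hC2 : MeasurableSet C2 := by
    have : C2 = (Prod.fst ⁻¹' D) ∩ {p : E × ℝ | φ p.1 ≤ p.2} := by
      ext p; simp [hC2def]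
    rw [this]
    exact (hD.preimage measurable_fst).inter
      (measurableSet_le (hφ.comp measurable_fst) measurable_snd)
  have hpair : Measurable (fun ω => (W ω, X ω)) := hW.prodMk hX
  have e1 : P {ω | W ω ∈ D ∧ X ω ∈ Ico (φ (W ω)) (φ (W ω) + ε)}
      = ((P.map W).prod (expMeasure β)) C1 := by
    rw [← hprod, Measure.map_apply hpair hC1]; rfl
  have e2 : P {ω | W ω ∈ D ∧ φ (W ω) ≤ X ω} = ((P.map W).prod (expMeasure β)) C2 := by
    rw [← hprod, Measure.map_apply hpair hC2]; rfl
  rw [e1, e2, Measure.prod_apply hC1, Measure.prod_apply hC2,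
    ← lintegral_const_mul' _ _ ENNReal.ofReal_ne_top]
  apply lintegral_mono
  intro v
  by_cases hv : v ∈ D
  · have s1 : (Prod.mk v ⁻¹' C1) = Ico (φ v) (φ v + ε) := by
      ext u; simp [hC1def, hv]
    have s2 : (Prod.mk v ⁻¹' C2) = Ici (φ v) := by
      ext u; simp [hC2def, hv]
    dsimp only
    rw [s1, s2]
    exact Stmt12Aux.expMeasure_key hβ hε (φ v)
  · have s1 : (Prod.mk v ⁻¹' C1) = ∅ := by ext u; simp [hC1def, hv]
    have s2 : (Prod.mk v ⁻¹' C2) = ∅ := by ext u; simp [hC2def, hv]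
    dsimp only
    simp [s1, s2]

end Stmt12Aux2

open Finset

namespace Stmt12Aux3

variable {n k : ℕ} (hk : 0 < k) {β L : ℝ} (hL : 0 < L)
variable {t : ℤ → ℝ} (ht : ∀ i : ℤ, t (i + k) = t i - L)
variable {a : ℤ → Fin n} (ha : ∀ i : ℤ, a (i + k) = a i)

include ht in
lemma t_shift (r : ℤ) : ∀ d : ℤ, t (r + d * k) = t r - d * L := by
  intro d
  induction d using Int.induction_on with
  | zero => simp
  | succ d ih =>
      have : r + (d + 1 : ℤ) * k = (r + d * k) + k := by ring
      rw [this, ht (r + d * k), ih]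
      push_cast; ring
  | pred d ih =>
      have h2 := ht (r + (-(d:ℤ) - 1) * k)
      have heq : r + (-(d:ℤ) - 1) * k + k = r + (-(d:ℤ)) * k := by ring
      rw [heq] at h2
      have h3 : t (r + (-(d:ℤ) - 1) * k) = t (r + (-(d:ℤ)) * k) + L := by linarith
      rw [h3, ih]; push_cast; ring

include ha in
lemma a_shift (r : ℤ) : ∀ d : ℤ, a (r + d * k) = a r := by
  intro d
  induction d using Int.induction_on with
  | zero => simp
  | succ d ih =>
      have : r + (d + 1 : ℤ) * k = (r + d * k) + k := by ring
      rw [this, ha (r + d * k), ih]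
  | pred d ih =>
      have h2 := ha (r + (-(d:ℤ) - 1) * k)
      have heq : r + (-(d:ℤ) - 1) * k + k = r + (-(d:ℤ)) * k := by ring
      rw [heq] at h2
      rw [← h2, ih]

include hk ht ha hL in
/-- window lemma: find a representative of `a r` in the window `[q-k, q)`,
with a smaller `t`-value when `r < q`. -/
lemma window (r q : ℤ) : ∃ q'', q - k ≤ q'' ∧ q'' < q ∧ a q'' = a r ∧ (r < q → t q'' ≤ t r) := by
  have hk' : (0:ℤ) < (k:ℤ) := by exact_mod_cast hk
  set d := (q - 1 - r) / k with hd
  set e := (q - 1 - r) % k with he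
  have hdiv : (k:ℤ) * d + e = q - 1 - r := Int.mul_ediv_add_emod _ _
  have he0 : 0 ≤ e := Int.emod_nonneg _ (ne_of_gt hk')
  have hek : e < k := Int.emod_lt_of_pos _ hk'
  have hcomm : (k:ℤ) * d = d * k := mul_comm _ _
  refine ⟨r + d * k, by omega, by omega, a_shift ha r d, fun hrq => ?_⟩
  rw [t_shift ht r d]
  have hd0 : 0 ≤ d := Int.ediv_nonneg (by omega) (by omega)
  nlinarith [mul_nonneg (show (0:ℝ) ≤ (d:ℝ) by exact_mod_cast hd0) hL.le]

include hk hL ht in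
/-- `t q → +∞` as `q → -∞`. -/
lemma t_tendsto (M : ℝ) : ∃ N : ℤ, ∀ q < N, M < t q := by
  have hk' : (0:ℤ) < (k:ℤ) := by exact_mod_cast hk
  have hne : (Finset.range k).Nonempty := ⟨0, Finset.mem_range.mpr hk⟩
  set Tm := (Finset.range k).inf' hne (fun r : ℕ => t (r : ℤ)) with hTm
  refine ⟨(⌈(Tm - M) / L⌉ - 1) * k, fun q hq => ?_⟩
  set d := q / k with hdd
  set r := q % k with hrr
  have hqe : r + d * k = q := by
    rw [hrr, hdd]; rw [mul_comm]; exact Int.emod_add_mul_ediv q k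
  have hr0 : 0 ≤ r := Int.emod_nonneg _ (ne_of_gt hk')
  have hrk : r < k := Int.emod_lt_of_pos _ hk'
  have htq : t q = t r - d * L := by rw [← hqe, t_shift ht r d]
  have hTmr : Tm ≤ t r := by
    have : r.toNat ∈ Finset.range k := Finset.mem_range.mpr (by omega)
    have h2 := Finset.inf'_le (fun r : ℕ => t (r : ℤ)) this
    rw [← hTm] at h2
    have : ((r.toNat : ℤ)) = r := Int.toNat_of_nonneg hr0
    rwa [this] at h2
  -- bound d
  have hdle : d ≤ ⌈(Tm - M) / L⌉ - 2 := by
    have h1 : q ≤ (⌈(Tm - M) / L⌉ - 1) * k - 1 := by omega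
    calc d = q / k := rfl
    _ ≤ ((⌈(Tm - M) / L⌉ - 1) * k - 1) / k := Int.ediv_le_ediv hk' h1
    _ = ⌈(Tm - M) / L⌉ - 2 := by
        have : (⌈(Tm - M) / L⌉ - 1) * k - 1 = (k - 1) + (⌈(Tm - M) / L⌉ - 2) * k := by ring
        rw [this, Int.add_mul_ediv_right _ _ (ne_of_gt hk'), Int.ediv_eq_zero_of_lt (by omega) (by omega)]
        ring
  have hdR : (d : ℝ) < (Tm - M) / L := by
    have h1 : (d:ℝ) ≤ (⌈(Tm - M) / L⌉ : ℝ) - 2 := by exact_mod_cast hdle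
    have h2 := Int.ceil_lt_add_one ((Tm - M) / L)
    linarith
  have : (d:ℝ) * L < Tm - M := by
    calc (d:ℝ) * L < ((Tm - M)/L) * L := mul_lt_mul_of_pos_right hdR hL
    _ = Tm - M := by field_simp
  rw [htq]; linarith

end Stmt12Aux3

open MeasureTheory ProbabilityTheory Real Set

namespace Stmt12Aux4

variable {n k : ℕ} (t : ℤ → ℝ) (a : ℤ → Fin n) (y' : ℝ) (i : Fin n)

/-- "q is a non-i index with s_q ≤ y'" as a function of the other coordinates. -/
def Pred (v : Fin n → ℝ) (q : ℤ) : Prop := a q ≠ i ∧ t q - v (a q) ≤ y'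

def Dset : Set (Fin n → ℝ) := {v | ∃ q, Pred t a y' i v q}

open Classical in
noncomputable def Qfun (v : Fin n → ℝ) : ℤ :=
  if h : ∃ q, Pred t a y' i v q ∧ ∀ q', Pred t a y' i v q' → q ≤ q' then h.choose else 0

/-- minimum of `t` over indices `q' < q` with `a q' = i` (computed on a window). -/
noncomputable def Tmin (k : ℕ) (t : ℤ → ℝ) (a : ℤ → Fin n) (i : Fin n) (q : ℤ) : ℝ :=
  if h : ((Finset.Ico (q - k) q).filter (fun q' => a q' = i)).Nonempty
  then ((Finset.Ico (q - k) q).filter (fun q' => a q' = i)).inf' h t else 0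

noncomputable def φf (k : ℕ) (v : Fin n → ℝ) : ℝ :=
  Tmin k t a i (Qfun t a y' i v) - y'

lemma measurable_predSet (q : ℤ) : MeasurableSet {v : Fin n → ℝ | Pred t a y' i v q} := by
  by_cases h : a q = i
  · have : {v : Fin n → ℝ | Pred t a y' i v q} = ∅ := by
      ext v; simp [Pred, h]
    rw [this]; exact MeasurableSet.empty
  · have : {v : Fin n → ℝ | Pred t a y' i v q} =
        (fun v : Fin n → ℝ => v (a q)) ⁻¹' (Ici (t q - y')) := by
      ext v
      simp only [Pred, mem_setOf_eq, Set.mem_preimage, Set.mem_Ici, h, ne_eq, not_false_eq_true, true_and]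
      constructor <;> intro <;> linarith
    rw [this]
    exact (measurable_pi_apply (a q)) measurableSet_Ici

lemma measurable_Dset : MeasurableSet (Dset t a y' i) := by
  have : Dset t a y' i = ⋃ q : ℤ, {v : Fin n → ℝ | Pred t a y' i v q} := by
    ext v; simp [Dset]
  rw [this]
  exact MeasurableSet.iUnion (fun q => measurable_predSet t a y' i q)

lemma Qfun_spec (hbdd : ∀ v : Fin n → ℝ, ∃ b : ℤ, ∀ q, Pred t a y' i v q → b ≤ q)
    {v : Fin n → ℝ} (hv : v ∈ Dset t a y' i) :
    Pred t a y' i v (Qfun t a y' i v) ∧ ∀ q', Pred t a y' i v q' → Qfun t a y' i v ≤ q' := by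
  have hex : ∃ q, Pred t a y' i v q ∧ ∀ q', Pred t a y' i v q' → q ≤ q' := by
    obtain ⟨lb, h1, h2⟩ := Int.exists_least_of_bdd (hbdd v) hv
    exact ⟨lb, h1, h2⟩
  rw [Qfun, dif_pos hex]
  exact hex.choose_spec

lemma Qfun_of_not_mem {v : Fin n → ℝ} (hv : v ∉ Dset t a y' i) : Qfun t a y' i v = 0 := by
  rw [Qfun, dif_neg]
  rintro ⟨q, hq, -⟩
  exact hv ⟨q, hq⟩

lemma measurable_Qfun (hbdd : ∀ v : Fin n → ℝ, ∃ b : ℤ, ∀ q, Pred t a y' i v q → b ≤ q) :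
    Measurable (Qfun t a y' i) := by
  apply measurable_to_countable'
  intro q
  have hA : MeasurableSet {v : Fin n → ℝ | Pred t a y' i v q ∧ ∀ q' < q, ¬ Pred t a y' i v q'} := by
    have : {v : Fin n → ℝ | Pred t a y' i v q ∧ ∀ q' < q, ¬ Pred t a y' i v q'} =
        {v | Pred t a y' i v q} ∩ ⋂ (q' : ℤ), ⋂ (_ : q' < q), {v | Pred t a y' i v q'}ᶜ := by
      ext v; simp [mem_iInter]
    rw [this]
    exact (measurable_predSet t a y' i q).inter
      (MeasurableSet.iInter fun q' => MeasurableSet.iInter fun _ =>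
        (measurable_predSet t a y' i q').compl)
  have key : ∀ v : Fin n → ℝ, v ∈ Dset t a y' i →
      (Qfun t a y' i v = q ↔ (Pred t a y' i v q ∧ ∀ q' < q, ¬ Pred t a y' i v q')) := by
    intro v hv
    obtain ⟨h1, h2⟩ := Qfun_spec t a y' i hbdd hv
    constructor
    · rintro rfl
      exact ⟨h1, fun q' hq' hp => absurd (h2 q' hp) (not_le.mpr hq')⟩
    · rintro ⟨hp, hmin⟩
      have hle := h2 q hp
      rcases eq_or_lt_of_le hle with h | h
      · exact h
      · exact absurd h1 (hmin _ h)
  by_cases hq0 : q = 0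
  · subst hq0
    have : (Qfun t a y' i) ⁻¹' {0} =
        {v : Fin n → ℝ | Pred t a y' i v 0 ∧ ∀ q' < (0:ℤ), ¬ Pred t a y' i v q'} ∪
          (Dset t a y' i)ᶜ := by
      ext v
      by_cases hv : v ∈ Dset t a y' i
      · simp only [Set.mem_preimage, Set.mem_singleton_iff, Set.mem_union, Set.mem_compl_iff, hv,
          not_true_eq_false, or_false, mem_setOf_eq]
        exact key v hv
      · simp only [Set.mem_preimage, Set.mem_singleton_iff, Set.mem_union, Set.mem_compl_iff, hv,
          not_false_eq_true, or_true, iff_true]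
        exact Qfun_of_not_mem t a y' i hv
    rw [this]
    exact hA.union (measurable_Dset t a y' i).compl
  · have : (Qfun t a y' i) ⁻¹' {q} =
        {v : Fin n → ℝ | Pred t a y' i v q ∧ ∀ q' < q, ¬ Pred t a y' i v q'} := by
      ext v
      by_cases hv : v ∈ Dset t a y' i
      · simpa using key v hv
      · simp only [Set.mem_preimage, mem_singleton_iff, mem_setOf_eq]
        rw [Qfun_of_not_mem t a y' i hv]
        constructor
        · intro h; exact absurd h.symm hq0
        · rintro ⟨hp, -⟩; exact absurd ⟨q, hp⟩ hv
    rw [this]; exact hA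
  
lemma measurable_φf (hbdd : ∀ v : Fin n → ℝ, ∃ b : ℤ, ∀ q, Pred t a y' i v q → b ≤ q) :
    Measurable (φf t a y' i k) := by
  have : φf t a y' i k = (fun q : ℤ => Tmin k t a i q - y') ∘ (Qfun t a y' i) := rfl
  rw [this]
  exact Measurable.of_discrete.comp (measurable_Qfun t a y' i hbdd)

section TminLemmas

variable {t a i} {L : ℝ}

lemma Tmin_le (hk : 0 < k) (ht : ∀ j : ℤ, t (j + k) = t j - L) (hL : 0 < L)
    (ha : ∀ j : ℤ, a (j + k) = a j) {q' q : ℤ} (hlt : q' < q) (hai : a q' = i) :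
    Tmin k t a i q ≤ t q' := by
  obtain ⟨q'', h1, h2, h3, h4⟩ := Stmt12Aux3.window hk hL ht ha q' q
  have hmem : q'' ∈ (Finset.Ico (q - k) q).filter (fun r => a r = i) := by
    simp only [Finset.mem_filter, Finset.mem_Ico]
    exact ⟨⟨h1, h2⟩, by rw [h3, hai]⟩
  rw [Tmin, dif_pos ⟨q'', hmem⟩]
  exact le_trans (Finset.inf'_le t hmem) (h4 hlt)

lemma Tmin_attained (hk : 0 < k) (ht : ∀ j : ℤ, t (j + k) = t j - L) (hL : 0 < L)
    (ha : ∀ j : ℤ, a (j + k) = a j) (hir : ∃ r, a r = i) (q : ℤ) :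
    ∃ qs, q - k ≤ qs ∧ qs < q ∧ a qs = i ∧ Tmin k t a i q = t qs := by
  obtain ⟨r, hr⟩ := hir
  obtain ⟨q'', h1, h2, h3, -⟩ := Stmt12Aux3.window hk hL ht ha r q
  have hne : ((Finset.Ico (q - k) q).filter (fun r => a r = i)).Nonempty := by
    refine ⟨q'', ?_⟩
    simp only [Finset.mem_filter, Finset.mem_Ico]
    exact ⟨⟨h1, h2⟩, by rw [h3, hr]⟩
  obtain ⟨qs, hmem, heq⟩ := Finset.exists_mem_eq_inf' hne t
  simp only [Finset.mem_filter, Finset.mem_Ico] at hmem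
  refine ⟨qs, hmem.1.1, hmem.1.2, hmem.2, by rw [Tmin, dif_pos hne]; exact heq⟩

end TminLemmas

end Stmt12Aux4


/-- Let `x₀, …, x_{n−1}` be independent `Exp(β)` random variables, `t : ℤ → ℝ` with
`t (i+k) = t i − L`, `a : ℤ → Fin n` `k`-periodic, and `s i = t i − x (a i)`.  Let
`f y = a (J y)` where `J y` is the minimal index with `s (J y) ≤ y`.  Then for every
`y` and `ε > 0`, the probability that `f` is not constant on `[y, y+ε]` is at most
`β ε` (a concrete form of the `O(βε)` bound). -/
theorem stmt12 {Ω : Type*} [MeasurableSpace Ω] (P : Measure Ω) [IsProbabilityMeasure P]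
    (n k : ℕ) [NeZero n] (hk : 0 < k) (β : ℝ) (hβ : 0 < β) (L : ℝ) (hL : 0 < L)
    (x : Fin n → Ω → ℝ) (hmeas : ∀ i, Measurable (x i))
    (hindep : iIndepFun x P)
    (hexp : ∀ i, Measure.map (x i) P = expMeasure β)
    (t : ℤ → ℝ) (ht : ∀ i : ℤ, t (i + k) = t i - L)
    (a : ℤ → Fin n) (ha : ∀ i : ℤ, a (i + k) = a i)
    (s : ℤ → Ω → ℝ) (hsdef : ∀ i ω, s i ω = t i - x (a i) ω)
    (J : ℝ → Ω → ℤ)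
    (hJ : ∀ y ω, s (J y ω) ω ≤ y ∧ ∀ q : ℤ, s q ω ≤ y → J y ω ≤ q)
    (f : ℝ → Ω → Fin n) (hf : ∀ y ω, f y ω = a (J y ω)) :
    ∀ (y ε : ℝ), 0 < ε →
      P {ω | ∃ z ∈ Set.Icc y (y + ε), f z ω ≠ f y ω} ≤ ENNReal.ofReal (β * ε) := by
  intro y ε hε
  classical
  set y' := y + ε with hy'
  haveI : Nonempty (Fin n) := ⟨⟨0, Nat.pos_of_ne_zero (NeZero.ne n)⟩⟩
  set c := ENNReal.ofReal (1 - Real.exp (-(β * ε))) with hcdef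
  -- the tuple of "other" coordinates, with coordinate i zeroed out
  set W : Fin n → Ω → (Fin n → ℝ) := fun i ω m => if m = i then 0 else x m ω with hWdef
  have hWx : ∀ (i : Fin n) (q : ℤ), a q ≠ i → ∀ ω, W i ω (a q) = x (a q) ω :=
    fun i q h ω => if_neg h
  have hWmeas : ∀ i, Measurable (W i) := by
    intro i
    apply measurable_pi_lambda
    intro m
    by_cases h : m = i
    · simp only [hWdef, h, if_pos rfl]
      exact measurable_const
    · simp only [hWdef, if_neg h]
      exact hmeas m
  have hWind : ∀ i, IndepFun (W i) (x i) P := by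
    intro i
    have hd : Disjoint ({i}ᶜ : Finset (Fin n)) ({i} : Finset (Fin n)) := by
      simp [Finset.disjoint_left]
    have base := hindep.indepFun_finset ({i}ᶜ : Finset (Fin n)) ({i} : Finset (Fin n)) hd hmeas
    set ψ : (({i}ᶜ : Finset (Fin n)) → ℝ) → (Fin n → ℝ) :=
      fun u m => if h : m ∈ ({i}ᶜ : Finset (Fin n)) then u ⟨m, h⟩ else 0 with hψdef
    set e : (({i} : Finset (Fin n)) → ℝ) → ℝ :=
      fun u => u ⟨i, Finset.mem_singleton_self i⟩ with hedef
    have hψ : Measurable ψ := by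
      apply measurable_pi_lambda
      intro m
      by_cases h : m ∈ ({i}ᶜ : Finset (Fin n))
      · simp only [hψdef, dif_pos h]
        exact measurable_pi_apply _
      · simp only [hψdef, dif_neg h]
        exact measurable_const
    have he : Measurable e := measurable_pi_apply _
    have hcomp := base.comp hψ he
    have h1 : (ψ ∘ fun ω (j : ({i}ᶜ : Finset (Fin n))) => x j ω) = W i := by
      funext ω
      funext m
      by_cases h : m = i
      · have hm : m ∉ ({i}ᶜ : Finset (Fin n)) := by simp [h]
        simp only [Function.comp_apply, hψdef, dif_neg hm, hWdef, if_pos h]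
      · have hm : m ∈ ({i}ᶜ : Finset (Fin n)) := by simp [h]
        simp only [Function.comp_apply, hψdef, dif_pos hm, hWdef, if_neg h]
    have h2 : (e ∘ fun ω (j : ({i} : Finset (Fin n))) => x j ω) = x i := rfl
    rw [h1, h2] at hcomp
    exact hcomp
  -- measurability of level sets of s
  have hsset : ∀ (z : ℝ) (q : ℤ), MeasurableSet {ω | s q ω ≤ z} := by
    intro z q
    have hs : {ω | s q ω ≤ z} = (x (a q)) ⁻¹' (Set.Ici (t q - z)) := by
      ext ω
      simp only [Set.mem_setOf_eq, Set.mem_preimage, Set.mem_Ici, hsdef]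
      constructor <;> intro <;> linarith
    rw [hs]
    exact (hmeas (a q)) measurableSet_Ici
  -- characterization of J
  have hJchar : ∀ (z : ℝ) (ω : Ω) (q : ℤ),
      J z ω = q ↔ (s q ω ≤ z ∧ ∀ q' < q, ¬ s q' ω ≤ z) := by
    intro z ω q
    constructor
    · rintro rfl
      exact ⟨(hJ z ω).1, fun q' hq' hs => absurd ((hJ z ω).2 q' hs) (not_le.mpr hq')⟩
    · rintro ⟨h1, h2⟩
      have hle := (hJ z ω).2 q h1
      rcases eq_or_lt_of_le hle with h | h
      · exact h
      · exact absurd (hJ z ω).1 (h2 _ h)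
  -- the partition by the identity of f y'
  set F : Fin n → Set Ω := fun i => {ω | f y' ω = i} with hFdef
  have hFeq : ∀ i, F i = ⋃ q : ℤ, {ω | a q = i ∧ s q ω ≤ y' ∧ ∀ q' < q, ¬ s q' ω ≤ y'} := by
    intro i
    ext ω
    simp only [hFdef, Set.mem_setOf_eq, Set.mem_iUnion]
    constructor
    · intro h
      exact ⟨J y' ω, by rw [← hf]; exact h, ((hJchar y' ω (J y' ω)).mp rfl).1,
        ((hJchar y' ω (J y' ω)).mp rfl).2⟩
    · rintro ⟨q, hq1, hq2, hq3⟩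
      rw [hf, (hJchar y' ω q).mpr ⟨hq2, hq3⟩, hq1]
  have hFmeas : ∀ i, MeasurableSet (F i) := by
    intro i
    rw [hFeq i]
    apply MeasurableSet.iUnion
    intro q
    by_cases h : a q = i
    · have heq : {ω | a q = i ∧ s q ω ≤ y' ∧ ∀ q' < q, ¬ s q' ω ≤ y'} =
          {ω | s q ω ≤ y'} ∩ ⋂ (q' : ℤ), ⋂ (_ : q' < q), {ω | s q' ω ≤ y'}ᶜ := by
        ext ω
        simp [h, Set.mem_iInter]
      rw [heq]
      exact (hsset y' q).inter (MeasurableSet.iInter fun q' =>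
        MeasurableSet.iInter fun _ => (hsset y' q').compl)
    · have heq : {ω | a q = i ∧ s q ω ≤ y' ∧ ∀ q' < q, ¬ s q' ω ≤ y'} = ∅ := by
        ext ω
        simp [h]
      rw [heq]
      exact MeasurableSet.empty
  have hFsum : ∑' i : Fin n, P (F i) = 1 := by
    have hdisj : Pairwise (Function.onFun Disjoint F) := by
      intro i j hij
      simp only [Function.onFun, hFdef]
      apply Set.disjoint_left.mpr
      rintro ω h1 h2
      simp only [Set.mem_setOf_eq] at h1 h2
      exact hij (h1.symm.trans h2)
    rw [← measure_iUnion hdisj hFmeas]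
    have huniv : ⋃ i, F i = Set.univ := by
      ext ω
      simp [hFdef]
    rw [huniv, measure_univ]
  -- boundedness of the set of candidate indices
  have hbdd : ∀ (i : Fin n) (v : Fin n → ℝ), ∃ b : ℤ,
      ∀ q, Stmt12Aux4.Pred t a y' i v q → b ≤ q := by
    intro i v
    obtain ⟨N, hN⟩ := Stmt12Aux3.t_tendsto hk hL ht
      (y' + Finset.univ.sup' Finset.univ_nonempty v)
    refine ⟨N, fun q hq => ?_⟩
    by_contra hcon
    push_neg at hcon
    have h1 := hN q hcon
    have h2 : v (a q) ≤ Finset.univ.sup' Finset.univ_nonempty v :=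
      Finset.le_sup' v (Finset.mem_univ _)
    have h3 := hq.2
    linarith
  set E : Set Ω := {ω | ∃ z ∈ Set.Icc y y', f z ω ≠ f y ω} with hEdef
  set Ei : Fin n → Set Ω := fun i => E ∩ F i with hEidef
  have hEsub : E ⊆ ⋃ i, Ei i := fun ω hω => Set.mem_iUnion.mpr ⟨f y' ω, hω, rfl⟩
  have hkey : ∀ i, P (Ei i) ≤ c * P (F i) := by
    intro i
    by_cases hir : ∃ r, a r = i
    · -- main case
      have hDm := Stmt12Aux4.measurable_Dset t a y' i
      have hφm := Stmt12Aux4.measurable_φf (k := k) t a y' i (hbdd i)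
      have hcore := Stmt12Aux2.core P (W i) (x i) (hWmeas i) (hmeas i) (hWind i) hβ (hexp i)
        (Stmt12Aux4.Dset t a y' i) hDm (Stmt12Aux4.φf t a y' i k) hφm hε
      have hBsub : Ei i ⊆ {ω | W i ω ∈ Stmt12Aux4.Dset t a y' i ∧
          x i ω ∈ Set.Ico (Stmt12Aux4.φf t a y' i k (W i ω))
            (Stmt12Aux4.φf t a y' i k (W i ω) + ε)} := by
        rintro ω ⟨hE, hFi⟩
        have hFi' : a (J y' ω) = i := by
          rw [← hf]
          exact hFi
        obtain ⟨z0, hz0, hfz0⟩ := hE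
        obtain ⟨z, hzmem, hfz⟩ : ∃ z ∈ Set.Icc y y', f z ω ≠ i := by
          by_cases hfy : f y ω = i
          · exact ⟨z0, hz0, fun h => hfz0 (h.trans hfy.symm)⟩
          · exact ⟨y, ⟨le_refl y, by rw [hy']; linarith⟩, hfy⟩
        have haJz : a (J z ω) ≠ i := by
          rw [← hf]
          exact hfz
        have hsJz : s (J z ω) ω ≤ y' := le_trans (hJ z ω).1 hzmem.2
        have hvD : W i ω ∈ Stmt12Aux4.Dset t a y' i := by
          refine ⟨J z ω, haJz, ?_⟩
          rw [hWx i _ haJz ω, ← hsdef]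
          exact hsJz
        obtain ⟨hQp, hQle⟩ := Stmt12Aux4.Qfun_spec t a y' i (hbdd i) hvD
        set Q := Stmt12Aux4.Qfun t a y' i (W i ω) with hQdef
        have hQp1 : a Q ≠ i := hQp.1
        have hsQ : s Q ω ≤ y' := by
          rw [hsdef, ← hWx i Q hQp1 ω]
          exact hQp.2
        have h1b : Stmt12Aux4.Tmin k t a i Q - y' ≤ x i ω := by
          by_contra hcon
          push_neg at hcon
          have hJyQ : J y' ω ≤ Q := (hJ y' ω).2 Q hsQ
          rcases eq_or_lt_of_le hJyQ with heq | hlt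
          · exact hQp1 (by rw [← heq]; exact hFi')
          · have hTle := Stmt12Aux4.Tmin_le hk ht hL ha hlt hFi'
            have hs1 : s (J y' ω) ω ≤ y' := (hJ y' ω).1
            rw [hsdef, hFi'] at hs1
            linarith
        have hQleJ : Q ≤ J z ω := by
          refine hQle (J z ω) ⟨haJz, ?_⟩
          rw [hWx i _ haJz ω, ← hsdef]
          exact hsJz
        obtain ⟨qs, hqs1, hqs2, hqs3, hqs4⟩ :=
          Stmt12Aux4.Tmin_attained hk ht hL ha hir (J z ω)
        have hsqs : ¬ s qs ω ≤ z := fun hcl => absurd ((hJ z ω).2 qs hcl) (not_le.mpr hqs2)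
        push_neg at hsqs
        rw [hsdef, hqs3] at hsqs
        obtain ⟨qss, hqss1, hqss2, hqss3, hqss4⟩ :=
          Stmt12Aux4.Tmin_attained hk ht hL ha hir Q
        have hT2 : Stmt12Aux4.Tmin k t a i (J z ω) ≤ Stmt12Aux4.Tmin k t a i Q := by
          rw [hqss4]
          exact Stmt12Aux4.Tmin_le hk ht hL ha (lt_of_lt_of_le hqss2 hQleJ) hqss3
        have h1c : x i ω < Stmt12Aux4.Tmin k t a i Q - y' + ε := by
          have h3 : x i ω < t qs - z := by linarith
          have hzy : y ≤ z := hzmem.1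
          have h5 : t qs = Stmt12Aux4.Tmin k t a i (J z ω) := hqs4.symm
          have h6 : y' = y + ε := hy'
          linarith
        exact ⟨hvD, h1b, h1c⟩
      have hGsub : {ω | W i ω ∈ Stmt12Aux4.Dset t a y' i ∧
          Stmt12Aux4.φf t a y' i k (W i ω) ≤ x i ω} ⊆ F i := by
        rintro ω ⟨hvD, hφle⟩
        obtain ⟨hQp, hQle⟩ := Stmt12Aux4.Qfun_spec t a y' i (hbdd i) hvD
        set Q := Stmt12Aux4.Qfun t a y' i (W i ω) with hQdef
        obtain ⟨qs, hqs1, hqs2, hqs3, hqs4⟩ := Stmt12Aux4.Tmin_attained hk ht hL ha hir Q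
        have hφle' : t qs - y' ≤ x i ω := by
          rw [← hqs4]
          exact hφle
        have hsqs : s qs ω ≤ y' := by
          rw [hsdef, hqs3]
          linarith
        have hJle : J y' ω ≤ qs := (hJ y' ω).2 qs hsqs
        show f y' ω = i
        rw [hf]
        by_contra hne
        have hpred : Stmt12Aux4.Pred t a y' i (W i ω) (J y' ω) := by
          refine ⟨hne, ?_⟩
          rw [hWx i _ hne ω, ← hsdef]
          exact (hJ y' ω).1
        have hcontra := hQle _ hpred
        exact absurd hcontra (not_le.mpr (lt_of_le_of_lt hJle hqs2))
      calc P (Ei i) ≤ P {ω | W i ω ∈ Stmt12Aux4.Dset t a y' i ∧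
          x i ω ∈ Set.Ico (Stmt12Aux4.φf t a y' i k (W i ω))
            (Stmt12Aux4.φf t a y' i k (W i ω) + ε)} := measure_mono hBsub
      _ ≤ c * P {ω | W i ω ∈ Stmt12Aux4.Dset t a y' i ∧
          Stmt12Aux4.φf t a y' i k (W i ω) ≤ x i ω} := hcore
      _ ≤ c * P (F i) := mul_le_mul_right (measure_mono hGsub) c
    · -- i is not in the range of a : Ei i = ∅
      have hempty : Ei i = ∅ := by
        ext ω
        simp only [hEidef, Set.mem_inter_iff, Set.mem_empty_iff_false, iff_false, not_and,
          hFdef, Set.mem_setOf_eq]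
        intro _ h
        exact hir ⟨J y' ω, by rw [← hf]; exact h⟩
      rw [hempty]
      simp
  calc P E ≤ P (⋃ i, Ei i) := measure_mono hEsub
  _ ≤ ∑' i, P (Ei i) := measure_iUnion_le _
  _ ≤ ∑' i, c * P (F i) := ENNReal.tsum_le_tsum hkey
  _ = c * ∑' i, P (F i) := ENNReal.tsum_mul_left
  _ = c := by rw [hFsum, mul_one]
  _ ≤ ENNReal.ofReal (β * ε) := by
      apply ENNReal.ofReal_le_ofReal
      have h := Real.add_one_le_exp (-(β * ε))
      linarith
end

section
/- (Non-Euclidean composite gradient descent, progress lemma) Let f = g + ψ : ℝⁿ → ℝ ∪ {∞} be convex with g convex and L-smooth with respect to a norm ‖·‖. Given x_k, define x_{k+1} = argmin_x ( ⟨∇g(x_k), x⟩ + (L/2)‖x − x_k‖² + ψ(x) ). Then for every minimizer x* of f: f(x_{k+1}) ≤ f(x_k) − min( (f(x_k) − f(x*))² / (2L‖x_k − x*‖²), (f(x_k) − f(x*))/2 ). -/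
lemma subgrad_aux {m : ℕ} (N : Seminorm ℝ (Fin m → ℝ))
    (L : ℝ) (hL : 0 < L)
    (g : (Fin m → ℝ) → ℝ) (Dg : (Fin m → ℝ) → (Fin m → ℝ))
    (hg_convex : ConvexOn ℝ Set.univ g)
    (hsmooth : ∀ p q, g p ≤ g q + (∑ i, Dg q i * (p i - q i)) + L / 2 * (N (p - q)) ^ 2)
    (p q : Fin m → ℝ) :
    g q + (∑ i, Dg q i * (p i - q i)) ≤ g p := by
  set D : ℝ := ∑ i, Dg q i * (p i - q i) with hD
  set C : ℝ := L / 2 * (N (p - q)) ^ 2 with hC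
  have hkey : ∀ s : ℝ, 0 < s → g q + D ≤ g p + C * s := by
    intro s hs
    have h1s : (0:ℝ) < 1 + s := by linarith
    set r : Fin m → ℝ := q + s • (q - p) with hr
    have hq : q = (1/(1+s)) • r + (s/(1+s)) • p := by
      funext i
      simp [hr, Pi.smul_apply, smul_eq_mul]
      field_simp
      ring
    have ha : (0:ℝ) ≤ 1/(1+s) := by positivity
    have hb : (0:ℝ) ≤ s/(1+s) := by positivity
    have hab : 1/(1+s) + s/(1+s) = 1 := by field_simp
    have hconv := hg_convex.2 (Set.mem_univ r) (Set.mem_univ p) ha hb hab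
    rw [← hq] at hconv
    have hrq : r - q = (-s) • (p - q) := by
      funext i; simp [hr]; ring
    have hNs : N (r - q) = s * N (p - q) := by
      rw [hrq, map_smul_eq_mul]
      simp [abs_of_pos hs]
    have hsum : (∑ i, Dg q i * (r i - q i)) = -s * D := by
      rw [hD, Finset.mul_sum]
      congr 1; funext i; simp [hr]; ring
    have hsm := hsmooth r q
    rw [hNs, hsum] at hsm
    -- hsm : g r ≤ g q + (-s * D) + L/2 * (s * N (p-q))^2
    have hCsq : L / 2 * (s * N (p - q))^2 = C * s^2 := by rw [hC]; ring
    rw [hCsq] at hsm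
    -- hconv : g q ≤ (1/(1+s)) * g r + (s/(1+s)) * g p
    have := hconv
    rw [smul_eq_mul, smul_eq_mul] at this
    have h2 : (1+s) * g q ≤ g r + s * g p := by
      have hne : (1+s) ≠ 0 := by linarith
      have h3 : 1 / (1 + s) * g r + s / (1 + s) * g p = (g r + s * g p) / (1 + s) := by
        field_simp
      rw [h3, le_div_iff₀ h1s] at this
      linarith
    nlinarith
  have hC0 : 0 ≤ C := by rw [hC]; positivity
  refine le_of_forall_pos_le_add ?_
  intro ε hε
  have hs : 0 < ε / (C + 1) := by positivity
  have := hkey _ hs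
  have : C * (ε / (C + 1)) ≤ ε := by
    rw [div_eq_mul_inv, ← mul_assoc]
    rw [mul_inv_le_iff₀' (by linarith)]
    nlinarith
  linarith [hkey _ hs]


open Finset

/-- (Non-Euclidean composite gradient descent, progress lemma.)
Let `f = g + ψ : ℝᵐ → ℝ ∪ {∞}` be convex, where `g : ℝᵐ → ℝ` is convex and `L`-smooth
with respect to an arbitrary norm `N` (in the descent-lemma form), with gradient `Dg`,
and `ψ : ℝᵐ → ℝ ∪ {∞}` is arbitrary.  Let
`xnext = argmin_x ( ⟨Dg xk, x⟩ + (L/2)·N(x − xk)² + ψ x )`.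
Then for every minimizer `xstar` of `f` (with `f xk = fk` and `f xstar = fstar` finite):
`f xnext ≤ fk − min( (fk − fstar)² / (2·L·N(xk − xstar)²), (fk − fstar)/2 )`. -/
theorem stmt13 {m : ℕ} (N : Seminorm ℝ (Fin m → ℝ)) (hN : ∀ p, N p = 0 → p = 0)
    (L : ℝ) (hL : 0 < L)
    (g : (Fin m → ℝ) → ℝ) (Dg : (Fin m → ℝ) → (Fin m → ℝ))
    (ψ : (Fin m → ℝ) → EReal) (hψ : ∀ p, ψ p ≠ ⊥)
    (f : (Fin m → ℝ) → EReal) (hfdef : ∀ p, f p = (g p : EReal) + ψ p)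
    (hg_convex : ConvexOn ℝ Set.univ g)
    (hsmooth : ∀ p q, g p ≤ g q + (∑ i, Dg q i * (p i - q i)) + L / 2 * (N (p - q)) ^ 2)
    (hf_convex : ∀ p q, ∀ τ : ℝ, 0 ≤ τ → τ ≤ 1 →
      f (τ • p + (1 - τ) • q) ≤ ((τ : EReal) * f p + ((1 - τ : ℝ) : EReal) * f q))
    (xk xnext : Fin m → ℝ)
    (hmin : ∀ p : Fin m → ℝ,
      (((∑ i, Dg xk i * xnext i) + L / 2 * (N (xnext - xk)) ^ 2 : ℝ) : EReal) + ψ xnext ≤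
      (((∑ i, Dg xk i * p i) + L / 2 * (N (p - xk)) ^ 2 : ℝ) : EReal) + ψ p)
    (xstar : Fin m → ℝ) (hstar : ∀ p, f xstar ≤ f p)
    (fk fstar : ℝ) (hfk : f xk = (fk : EReal)) (hfstar : f xstar = (fstar : EReal)) :
    f xnext ≤
      ((fk - min ((fk - fstar) ^ 2 / (2 * L * (N (xk - xstar)) ^ 2))
          ((fk - fstar) / 2) : ℝ) : EReal) := by

  classical
  obtain ⟨Δ, hΔdef⟩ : ∃ d : ℝ, d = fk - fstar := ⟨_, rfl⟩
  obtain ⟨R, hRdef⟩ : ∃ r : ℝ, r = N (xk - xstar) := ⟨_, rfl⟩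
  have hΔ0 : 0 ≤ Δ := by
    have h := hstar xk
    rw [hfstar, hfk] at h
    have : fstar ≤ fk := by exact_mod_cast h
    rw [hΔdef]
    linarith
  have hR0 : 0 ≤ R := by
    rw [hRdef]
    exact apply_nonneg N _
  obtain ⟨τ, hτdef⟩ : ∃ t : ℝ, t = min 1 (Δ / (L * R ^ 2)) := ⟨_, rfl⟩
  have hτ1 : τ ≤ 1 := by rw [hτdef]; exact min_le_left _ _
  have hτ0 : 0 ≤ τ := by
    rw [hτdef]
    rcases le_or_gt (L * R ^ 2) 0 with h | h
    · have h2 : R ^ 2 ≤ 0 := by nlinarith [sq_nonneg R]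
      have h3 : R ^ 2 = 0 := le_antisymm h2 (sq_nonneg R)
      have h4 : R = 0 := by
        exact pow_eq_zero_iff two_ne_zero |>.mp h3
      have h5 : Δ / (L * R ^ 2) = 0 := by rw [h4]; simp
      rw [h5]
      norm_num
    · exact le_min (by norm_num) (div_nonneg hΔ0 h.le)
  obtain ⟨xτ, hxτdef⟩ : ∃ x : Fin m → ℝ, x = τ • xstar + (1 - τ) • xk := ⟨_, rfl⟩
  -- convexity of f at xτ
  have hcomb : f xτ ≤ ((τ * fstar + (1 - τ) * fk : ℝ) : EReal) := by
    have h := hf_convex xstar xk τ hτ0 hτ1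
    rw [hfstar, hfk] at h
    rw [hxτdef]
    refine h.trans_eq ?_
    norm_cast
  -- ψ xτ is a real number
  have hψτ_ne_top : ψ xτ ≠ ⊤ := by
    intro h
    rw [hfdef xτ, h, EReal.coe_add_top] at hcomb
    exact EReal.coe_ne_top _ (top_le_iff.mp hcomb)
  obtain ⟨ψτ, hψτ⟩ : ∃ r : ℝ, ψ xτ = (r : EReal) :=
    ⟨(ψ xτ).toReal, (EReal.coe_toReal hψτ_ne_top (hψ xτ)).symm⟩
  have hcombR : g xτ + ψτ ≤ τ * fstar + (1 - τ) * fk := by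
    rw [hfdef xτ, hψτ] at hcomb
    exact_mod_cast hcomb
  -- ψ xnext is a real number
  have hm := hmin xτ
  rw [hψτ] at hm
  have hψn_ne_top : ψ xnext ≠ ⊤ := by
    intro h
    rw [h, EReal.coe_add_top] at hm
    have : ((((∑ i, Dg xk i * xτ i) + L / 2 * (N (xτ - xk)) ^ 2 : ℝ) : EReal) + (ψτ : EReal)) ≠ ⊤ := by
      rw [← EReal.coe_add]
      exact EReal.coe_ne_top _
    exact this (top_le_iff.mp hm)
  obtain ⟨ψn, hψn⟩ : ∃ r : ℝ, ψ xnext = (r : EReal) :=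
    ⟨(ψ xnext).toReal, (EReal.coe_toReal hψn_ne_top (hψ xnext)).symm⟩
  rw [hψn] at hm
  have hmR : (∑ i, Dg xk i * xnext i) + L / 2 * (N (xnext - xk)) ^ 2 + ψn ≤
      (∑ i, Dg xk i * xτ i) + L / 2 * (N (xτ - xk)) ^ 2 + ψτ := by
    exact_mod_cast hm
  -- N (xτ - xk) = τ * R
  have hNτ : N (xτ - xk) = τ * R := by
    have h1 : xτ - xk = τ • (xstar - xk) := by
      rw [hxτdef]; funext i; simp; ring
    rw [h1, map_smul_eq_mul]
    have : xstar - xk = -(xk - xstar) := by ring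
    rw [this, map_neg_eq_map]
    simp [abs_of_nonneg hτ0, hRdef]
  -- smoothness at (xnext, xk)
  have hs := hsmooth xnext xk
  -- subgradient step
  have hsub := subgrad_aux N L hL g Dg hg_convex hsmooth xτ xk
  -- sum expansions
  have e1 : (∑ i, Dg xk i * (xnext i - xk i)) =
      (∑ i, Dg xk i * xnext i) - ∑ i, Dg xk i * xk i := by
    rw [← Finset.sum_sub_distrib]; congr 1; funext i; ring
  have e2 : (∑ i, Dg xk i * (xτ i - xk i)) =
      (∑ i, Dg xk i * xτ i) - ∑ i, Dg xk i * xk i := by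
    rw [← Finset.sum_sub_distrib]; congr 1; funext i; ring
  rw [e1] at hs
  rw [e2] at hsub
  rw [hNτ] at hmR
  -- main real bound
  have hbound : g xnext + ψn ≤ fk - (τ * Δ - L / 2 * τ ^ 2 * R ^ 2) := by
    have hτR : L / 2 * (τ * R) ^ 2 = L / 2 * τ ^ 2 * R ^ 2 := by ring
    rw [hτR] at hmR
    rw [hΔdef]
    nlinarith [hs, hmR, hsub, hcombR]
  -- the chosen τ achieves the required decrease
  have hdec : min (Δ ^ 2 / (2 * L * R ^ 2)) (Δ / 2) ≤ τ * Δ - L / 2 * τ ^ 2 * R ^ 2 := by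
    rcases le_or_gt Δ (L * R ^ 2) with h | h
    · rcases eq_or_lt_of_le hR0 with hRz | hRp
      · have hz : L * R ^ 2 = 0 := by rw [← hRz]; ring
        have hΔz : Δ = 0 := by linarith
        have hτz : τ = 0 := by
          rw [hτdef, hΔz]; simp
        rw [hΔz, hτz]
        simp
      · have hLR : 0 < L * R ^ 2 := by positivity
        have hτeq : τ = Δ / (L * R ^ 2) := by
          rw [hτdef, min_eq_right]
          rw [div_le_one hLR]; exact h
        have hval : τ * Δ - L / 2 * τ ^ 2 * R ^ 2 = Δ ^ 2 / (2 * L * R ^ 2) := by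
          rw [hτeq]; field_simp; ring
        rw [hval]
        exact min_le_left _ _
    · have hRp : 0 < R := by
        rcases eq_or_lt_of_le hR0 with hRz | hRp
        · exfalso
          have : xk - xstar = 0 := hN _ (hRdef ▸ hRz.symm)
          have hx : xk = xstar := by
            funext i; have := congrFun this i; simpa [sub_eq_zero] using this
          have : fk = fstar := by
            have h1 := hfk
            rw [hx, hfstar] at h1
            exact_mod_cast h1.symm
          rw [hΔdef, this] at h
          have hz : L * R ^ 2 = 0 := by rw [← hRz]; ring
          linarith
        · exact hRp
      have hLR : 0 < L * R ^ 2 := by positivity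
      have hτeq : τ = 1 := by
        rw [hτdef, min_eq_left]
        rw [le_div_iff₀ hLR]; linarith
      rw [hτeq]
      refine (min_le_right _ _).trans ?_
      nlinarith
  -- conclude in EReal
  rw [hfdef xnext, hψn]
  have hfinal : g xnext + ψn ≤ fk - min (Δ ^ 2 / (2 * L * R ^ 2)) (Δ / 2) := by linarith
  rw [hΔdef, hRdef] at hfinal
  exact_mod_cast hfinal
end

section
/- (Non-Euclidean composite gradient descent, convergence) Under the setup of the progress lemma, if additionally f is finite only on a region of diameter D in ‖·‖, then for all k ≥ 1: ε_k ≤ max( 2LD² / (⌊(k−1)/2⌋ + 4), (1/2)^{⌊(k−1)/2⌋} ε₀ ), where ε_k = f(x_k) − min_x f(x). -/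
open Finset


/-- Subgradient inequality from smoothness + convexity. -/
lemma my_subgrad {m : ℕ} (N : Seminorm ℝ (Fin m → ℝ))
    (L : ℝ) (hL : 0 < L)
    (g : (Fin m → ℝ) → ℝ) (Dg : (Fin m → ℝ) → (Fin m → ℝ))
    (hg : ConvexOn ℝ Set.univ g)
    (hsmooth : ∀ p q, g p ≤ g q + (∑ i, Dg q i * (p i - q i)) + L / 2 * (N (p - q)) ^ 2)
    (q d : Fin m → ℝ) : g q + ∑ i, Dg q i * d i ≤ g (q + d) := by
  set A := ∑ i, Dg q i * d i with hA
  have key : ∀ t : ℝ, 0 < t → t ≤ 1 → A ≤ g (q + d) - g q + L / 2 * t * (N d) ^ 2 := by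
    intro t ht0 ht1
    have h1 := hsmooth (q - t • d) q
    have e1 : (q - t • d) - q = (-t) • d := by funext i; simp; try ring
    have e2 : ∑ i, Dg q i * ((q - t • d) i - q i) = -t * A := by
      rw [hA, Finset.mul_sum]
      refine Finset.sum_congr rfl fun i _ => ?_
      simp [Pi.smul_apply, smul_eq_mul]; ring
    have e3 : N ((q - t • d) - q) = t * N d := by
      rw [e1, map_smul_eq_mul]
      simp [abs_of_pos ht0]
    rw [e2, e3] at h1
    have hmid : g q ≤ (1/2 : ℝ) * g (q + t • d) + (1/2 : ℝ) * g (q - t • d) := by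
      have h := hg.2 (Set.mem_univ (q + t • d)) (Set.mem_univ (q - t • d))
        (by norm_num : (0:ℝ) ≤ 1/2) (by norm_num : (0:ℝ) ≤ 1/2) (by norm_num)
      have hq : (1/2 : ℝ) • (q + t • d) + (1/2 : ℝ) • (q - t • d) = q := by
        funext i; simp; try ring
      rw [hq] at h
      simpa [smul_eq_mul] using h
    have hcmb : g (q + t • d) ≤ t * g (q + d) + (1 - t) * g q := by
      have h := hg.2 (Set.mem_univ (q + d)) (Set.mem_univ q) ht0.le
        (by linarith : (0:ℝ) ≤ 1 - t) (by ring)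
      have hq : t • (q + d) + (1 - t) • q = q + t • d := by
        funext i; simp; try ring
      rw [hq] at h
      simpa [smul_eq_mul] using h
    have h4 : t * A ≤ t * (g (q + d) - g q + L / 2 * t * (N d) ^ 2) := by nlinarith
    exact le_of_mul_le_mul_left h4 ht0
  refine le_of_forall_pos_le_add fun ε hε => ?_
  rcases le_or_gt (L / 2 * (N d) ^ 2) 0 with h | h
  · have := key 1 one_pos le_rfl
    nlinarith
  · set t := min 1 (ε / (L / 2 * (N d) ^ 2)) with htdef
    have ht0 : 0 < t := lt_min one_pos (div_pos hε h)
    have hk := key t ht0 (min_le_left _ _)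
    have h2 : L / 2 * t * (N d) ^ 2 ≤ ε := by
      have h3 : t ≤ ε / (L / 2 * (N d) ^ 2) := min_le_right _ _
      calc L / 2 * t * (N d) ^ 2 = t * (L / 2 * (N d) ^ 2) := by ring
        _ ≤ (ε / (L / 2 * (N d) ^ 2)) * (L / 2 * (N d) ^ 2) := by
            exact mul_le_mul_of_nonneg_right h3 h.le
        _ = ε := div_mul_cancel₀ _ h.ne'
    linarith


/-- Pure real recursion bound. -/
lemma my_recBound (C : ℝ) (e : ℕ → ℝ) (he : ∀ k, 0 ≤ e k)
    (hstep : ∀ (k : ℕ) (τ : ℝ), 0 ≤ τ → τ ≤ 1 →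
      e (k + 1) ≤ (1 - τ) * e k + C / 4 * τ ^ 2) :
    ∀ K : ℕ, 1 ≤ K →
      e K ≤ max (C / ((((K - 1) / 2 : ℕ) : ℝ) + 4)) ((1 / 2 : ℝ) ^ ((K - 1) / 2 : ℕ) * e 0) := by
  have hC : 0 ≤ C := by
    have h := hstep 0 1 zero_le_one le_rfl
    have := he 1
    nlinarith
  have hmono1 : ∀ k, e (k + 1) ≤ e k := by
    intro k
    have h := hstep k 0 le_rfl zero_le_one
    simpa using h
  have hmono : ∀ a b : ℕ, a ≤ b → e b ≤ e a := by
    intro a b hab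
    induction b with
    | zero => simp_all
    | succ n ih =>
      rcases Nat.lt_or_ge a (n + 1) with h | h
      · exact (hmono1 n).trans (ih (by omega))
      · have : a = n + 1 := by omega
        simp [this]
  have hhalf : ∀ k, C ≤ 2 * e k → e (k + 1) ≤ e k / 2 := by
    intro k hk
    have h := hstep k 1 zero_le_one le_rfl
    nlinarith
  -- once small: decrement lemma
  have hdec : ∀ (k : ℕ) (t : ℝ), 1 ≤ t → e k * t ≤ C → e (k + 1) * (t + 1) ≤ C := by
    intro k t ht hk
    have ht1 : (0:ℝ) < t + 1 := by linarith
    have hτ0 : (0:ℝ) ≤ 2 / (t + 1) := by positivity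
    have hτ1 : (2:ℝ) / (t + 1) ≤ 1 := by
      rw [div_le_one ht1]; linarith
    have h := hstep k (2 / (t + 1)) hτ0 hτ1
    have hek := he k
    have hek1 := he (k + 1)
    -- multiply through
    have h2 : e (k + 1) * (t + 1) ≤ ((1 - 2 / (t + 1)) * e k + C / 4 * (2 / (t + 1)) ^ 2) * (t + 1) :=
      mul_le_mul_of_nonneg_right h ht1.le
    have h3 : ((1 - 2 / (t + 1)) * e k + C / 4 * (2 / (t + 1)) ^ 2) * (t + 1)
        = (t - 1) * e k + C / (t + 1) := by
      field_simp
      ring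
    rw [h3] at h2
    have h4 : (t - 1) * e k + C / (t + 1) ≤ C := by
      have h5 : (t - 1) * e k * t ≤ (t - 1) * C := by nlinarith
      have h6 : C / (t + 1) ≤ C / t := by
        apply div_le_div_of_nonneg_left hC (by linarith) (by linarith)
      -- (t-1) * e k ≤ (t-1)*C/t  and  C/(t+1) ≤ C/t ... combine: need (t-1)C/t + C/t ≤ C : equality
      rcases eq_or_lt_of_le ht with rfl | ht'
      · simp at h5 ⊢
        have : C / (1 + 1) ≤ C := by
          have : C / 2 ≤ C := by linarith [half_le_self hC]
          simpa [one_add_one_eq_two] using this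
        linarith
      · have ht0 : (0:ℝ) < t := by linarith
        have h7 : (t - 1) * e k ≤ (t - 1) * C / t := by
          rw [le_div_iff₀ ht0]; nlinarith
        have h8 : (t - 1) * C / t + C / t = C := by field_simp; ring
        linarith
    linarith
  have hphase : ∀ (j : ℕ), e j * 2 ≤ C → ∀ i : ℕ, e (j + i) * (2 + i) ≤ C := by
    intro j hj i
    induction i with
    | zero => simpa using hj
    | succ n ih =>
      have := hdec (j + n) (2 + n) (by have := Nat.cast_nonneg (α:=ℝ) n; linarith) ih
      have harr : j + (n + 1) = (j + n) + 1 := by omega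
      rw [harr]
      convert this using 2
      push_cast
      ring
  intro K hK
  set n := (K - 1) / 2 with hn
  set J := K - n - 1 with hJ
  have hnK : 2 * n ≤ K - 1 := by omega
  by_cases hc : ∃ j, j < J ∧ e j * 2 ≤ C
  · obtain ⟨j, hjJ, hj⟩ := hc
    have hi : j + (K - j) = K := by omega
    have hKj : n + 2 ≤ K - j := by omega
    have h := hphase j hj (K - j)
    rw [hi] at h
    have hpos : (0:ℝ) < 2 + ((K - j : ℕ) : ℝ) := by positivity
    have h1 : e K ≤ C / (2 + ((K - j : ℕ) : ℝ)) := by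
      rw [le_div_iff₀ hpos]; linarith
    have h2 : C / (2 + ((K - j : ℕ) : ℝ)) ≤ C / ((n : ℝ) + 4) := by
      apply div_le_div_of_nonneg_left hC (by positivity)
      have : ((n : ℝ) + 2) ≤ ((K - j : ℕ) : ℝ) := by exact_mod_cast Nat.cast_le.mpr hKj |>.trans_eq rfl
      linarith
    exact le_max_of_le_left (h1.trans h2)
  · push_neg at hc
    have hgeo : ∀ i : ℕ, i ≤ J → e i ≤ (1 / 2 : ℝ) ^ i * e 0 := by
      intro i
      induction i with
      | zero => intro _; simp
      | succ l ih =>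
        intro hl
        have hlJ : l < J := by omega
        have h1 := hc l hlJ
        have h2 := hhalf l (by linarith)
        have h3 := ih (by omega)
        calc e (l + 1) ≤ e l / 2 := h2
          _ ≤ ((1 / 2 : ℝ) ^ l * e 0) / 2 := by linarith
          _ = (1 / 2 : ℝ) ^ (l + 1) * e 0 := by ring
    have hnJ : n ≤ J := by omega
    have h1 : e K ≤ e J := hmono J K (by omega)
    have h2 : e J ≤ (1 / 2 : ℝ) ^ J * e 0 := hgeo J le_rfl
    have h3 : (1 / 2 : ℝ) ^ J * e 0 ≤ (1 / 2 : ℝ) ^ n * e 0 := by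
      apply mul_le_mul_of_nonneg_right _ (he 0)
      exact pow_le_pow_of_le_one (by norm_num) (by norm_num) hnJ
    exact le_max_of_le_right (h1.trans (h2.trans h3))


/-- (Non-Euclidean composite gradient descent, convergence.) -/
theorem stmt14 {m : ℕ} (N : Seminorm ℝ (Fin m → ℝ)) (hN : ∀ p, N p = 0 → p = 0)
    (L : ℝ) (hL : 0 < L) (D : ℝ) (hD : 0 ≤ D)
    (g : (Fin m → ℝ) → ℝ) (Dg : (Fin m → ℝ) → (Fin m → ℝ))
    (ψ : (Fin m → ℝ) → EReal) (hψ : ∀ p, ψ p ≠ ⊥)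
    (f : (Fin m → ℝ) → EReal) (hfdef : ∀ p, f p = (g p : EReal) + ψ p)
    (hg_convex : ConvexOn ℝ Set.univ g)
    (hsmooth : ∀ p q, g p ≤ g q + (∑ i, Dg q i * (p i - q i)) + L / 2 * (N (p - q)) ^ 2)
    (hf_convex : ∀ p q, ∀ τ : ℝ, 0 ≤ τ → τ ≤ 1 →
      f (τ • p + (1 - τ) • q) ≤ ((τ : EReal) * f p + ((1 - τ : ℝ) : EReal) * f q))
    (hdiam : ∀ p q, f p ≠ ⊤ → f q ≠ ⊤ → N (p - q) ≤ D)
    (x : ℕ → Fin m → ℝ)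
    (hmin : ∀ (K : ℕ) (p : Fin m → ℝ),
      (((∑ i, Dg (x K) i * x (K + 1) i) + L / 2 * (N (x (K + 1) - x K)) ^ 2 : ℝ) : EReal)
          + ψ (x (K + 1)) ≤
      (((∑ i, Dg (x K) i * p i) + L / 2 * (N (p - x K)) ^ 2 : ℝ) : EReal) + ψ p)
    (xstar : Fin m → ℝ) (hstar : ∀ p, f xstar ≤ f p)
    (fstar : ℝ) (hfstar : f xstar = (fstar : EReal)) :
    ∀ K : ℕ, 1 ≤ K →
      f (x K) - (fstar : EReal) ≤
        max ((2 * L * D ^ 2 / ((((K - 1) / 2 : ℕ) : ℝ) + 4) : ℝ) : EReal)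
          ((((1 / 2 : ℝ) ^ ((K - 1) / 2 : ℕ) : ℝ) : EReal) * (f (x 0) - (fstar : EReal))) := by
  intro K hK
  by_cases h0 : f (x 0) = ⊤
  · rw [h0, EReal.top_sub_coe,
      EReal.coe_mul_top_of_pos (by positivity : (0:ℝ) < (1/2 : ℝ) ^ ((K - 1) / 2 : ℕ))]
    exact le_trans le_top (le_max_right _ _)
  -- ψ (x k) is never ⊤
  have hψx : ∀ k, ψ (x k) ≠ ⊤ := by
    intro k
    induction k with
    | zero =>
      intro h
      exact h0 (by rw [hfdef, h, EReal.coe_add_top])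
    | succ n ih =>
      intro h
      have hm := hmin n (x n)
      obtain ⟨r, hr⟩ : ∃ r : ℝ, ψ (x n) = (r : EReal) :=
        ⟨_, (EReal.coe_toReal ih (hψ _)).symm⟩
      rw [h, hr, EReal.coe_add_top] at hm
      rw [top_le_iff] at hm
      exact (EReal.coe_ne_top _) hm
  have hfr : ∀ k, ∃ r : ℝ, f (x k) = (r : EReal) := by
    intro k
    obtain ⟨r, hr⟩ : ∃ r : ℝ, ψ (x k) = (r : EReal) :=
      ⟨_, (EReal.coe_toReal (hψx k) (hψ _)).symm⟩
    exact ⟨g (x k) + r, by rw [hfdef, hr]; norm_cast⟩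
  choose F hF using hfr
  have hfxtop : ∀ k, f (x k) ≠ ⊤ := fun k => by rw [hF k]; exact EReal.coe_ne_top _
  set C : ℝ := 2 * L * D ^ 2 with hCdef
  set e : ℕ → ℝ := fun k => F k - fstar with hedef
  have he : ∀ k, 0 ≤ e k := by
    intro k
    have h := hstar (x k)
    rw [hfstar, hF k, EReal.coe_le_coe_iff] at h
    simp [hedef]; linarith
  have hstep : ∀ (k : ℕ) (τ : ℝ), 0 ≤ τ → τ ≤ 1 →
      e (k + 1) ≤ (1 - τ) * e k + C / 4 * τ ^ 2 := by
    intro k τ hτ0 hτ1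
    set p := τ • xstar + (1 - τ) • x k with hp
    have hconv := hf_convex xstar (x k) τ hτ0 hτ1
    rw [hfstar, hF k] at hconv
    have hconv' : f p ≤ ((τ * fstar + (1 - τ) * F k : ℝ) : EReal) := by
      refine hconv.trans_eq ?_
      norm_cast
    have hψp : ψ p ≠ ⊤ := by
      intro h
      rw [hfdef, h, EReal.coe_add_top, top_le_iff] at hconv'
      exact (EReal.coe_ne_top _) hconv'
    obtain ⟨b, hb⟩ : ∃ b : ℝ, ψ p = (b : EReal) :=
      ⟨_, (EReal.coe_toReal hψp (hψ _)).symm⟩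
    have hconvR : g p + b ≤ τ * fstar + (1 - τ) * F k := by
      rw [hfdef, hb] at hconv'
      exact_mod_cast hconv'
    obtain ⟨a1, ha1⟩ : ∃ r : ℝ, ψ (x (k+1)) = (r : EReal) :=
      ⟨_, (EReal.coe_toReal (hψx _) (hψ _)).symm⟩
    obtain ⟨a0, ha0⟩ : ∃ r : ℝ, ψ (x k) = (r : EReal) :=
      ⟨_, (EReal.coe_toReal (hψx _) (hψ _)).symm⟩
    have hF1 : F (k+1) = g (x (k+1)) + a1 := by
      have h := hF (k+1); rw [hfdef, ha1] at h; exact_mod_cast h.symm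
    have hF0 : F k = g (x k) + a0 := by
      have h := hF k; rw [hfdef, ha0] at h; exact_mod_cast h.symm
    have hminR : (∑ i, Dg (x k) i * x (k+1) i) + L / 2 * (N (x (k+1) - x k)) ^ 2 + a1 ≤
        (∑ i, Dg (x k) i * p i) + L / 2 * (N (p - x k)) ^ 2 + b := by
      have h := hmin k p
      rw [ha1, hb] at h
      exact_mod_cast h
    have hsm := hsmooth (x (k+1)) (x k)
    have hsg : g (x k) + ∑ i, Dg (x k) i * (p i - x k i) ≤ g p := by
      have h := my_subgrad N L hL g Dg hg_convex hsmooth (x k) (p - x k)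
      have h2 : x k + (p - x k) = p := by funext i; simp
      rw [h2] at h
      simpa using h
    have hpN : N (p - x k) = τ * N (xstar - x k) := by
      have h : p - x k = τ • (xstar - x k) := by funext i; simp [hp]; ring
      rw [h, map_smul_eq_mul]
      simp [abs_of_nonneg hτ0]
    have hND : N (xstar - x k) ≤ D :=
      hdiam xstar (x k) (by rw [hfstar]; exact EReal.coe_ne_top _) (hfxtop k)
    have hNsq : L / 2 * (N (p - x k)) ^ 2 ≤ C / 4 * τ ^ 2 := by
      rw [hpN, hCdef]
      have hNn := apply_nonneg N (xstar - x k)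
      nlinarith [mul_nonneg (sub_nonneg.2 hND) (by linarith : (0:ℝ) ≤ D + N (xstar - x k)), mul_nonneg hL.le (sq_nonneg τ)]
    have hsum1 : ∑ i, Dg (x k) i * (x (k+1) i - x k i)
        = (∑ i, Dg (x k) i * x (k+1) i) - ∑ i, Dg (x k) i * x k i := by
      rw [← Finset.sum_sub_distrib]
      exact Finset.sum_congr rfl fun i _ => by ring
    have hsum2 : ∑ i, Dg (x k) i * (p i - x k i)
        = (∑ i, Dg (x k) i * p i) - ∑ i, Dg (x k) i * x k i := by
      rw [← Finset.sum_sub_distrib]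
      exact Finset.sum_congr rfl fun i _ => by ring
    have key : F (k+1) ≤ τ * fstar + (1 - τ) * F k + L / 2 * (N (p - x k)) ^ 2 := by
      rw [hF1]
      rw [hsum1] at hsm
      rw [hsum2] at hsg
      linarith
    simp only [hedef]
    nlinarith [key, hNsq]
  have hfinal := my_recBound C e he hstep K hK
  rw [hF K, hF 0]
  have hcoe1 : (F K : EReal) - (fstar : EReal) = ((e K : ℝ) : EReal) := by
    rw [hedef]; norm_cast
  have hcoe0 : (F 0 : EReal) - (fstar : EReal) = ((e 0 : ℝ) : EReal) := by
    rw [hedef]; norm_cast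
  rw [hcoe1, hcoe0]
  have hcoe2 : (((1 / 2 : ℝ) ^ ((K - 1) / 2 : ℕ) : ℝ) : EReal) * ((e 0 : ℝ) : EReal)
      = (((1 / 2 : ℝ) ^ ((K - 1) / 2 : ℕ) * e 0 : ℝ) : EReal) := by norm_cast
  rw [hcoe2]
  rcases le_max_iff.mp hfinal with h | h
  · exact le_max_of_le_left (by exact_mod_cast h)
  · exact le_max_of_le_right (by exact_mod_cast h)
end

section
/- If a two-way infinite sequence s satisfies s_{i+k} = s_i − L with L > 0 and the associated sequences c and function f are defined as above, then f cannot change values more than k times on any interval of length L. -/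
/-- If `s : ℤ → ℝ` satisfies `s (i+k) = s i − L` with `L > 0`, `a : ℤ → Fin n` is
`k`-periodic, and `f y = a (J y)` where `J y` is the minimal index with `s (J y) ≤ y`,
then `f` cannot change values more than `k` times on any interval of length `L`
(changes counted as the points of `(y, y+L]` at which `f` is not locally constant
on the left). -/
theorem stmt15 (k n : ℕ) (hk : 0 < k) (L : ℝ) (hL : 0 < L)
    (s : ℤ → ℝ) (hs : ∀ i : ℤ, s (i + k) = s i - L)
    (a : ℤ → Fin n) (ha : ∀ i : ℤ, a (i + k) = a i)
    (J : ℝ → ℤ)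
    (hJ : ∀ y : ℝ, s (J y) ≤ y ∧ ∀ q : ℤ, s q ≤ y → J y ≤ q)
    (f : ℝ → Fin n) (hf : ∀ y, f y = a (J y)) :
    ∀ y : ℝ,
      Nat.card {z : ℝ | z ∈ Set.Ioc y (y + L) ∧
        ∀ δ > (0 : ℝ), ∃ z' ∈ Set.Ioo (z - δ) z, f z' ≠ f z} ≤ k := by
  intro y
  set S : Set ℝ := {z : ℝ | z ∈ Set.Ioc y (y + L) ∧
      ∀ δ > (0 : ℝ), ∃ z' ∈ Set.Ioo (z - δ) z, f z' ≠ f z} with hS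
  have hmono : ∀ {u v : ℝ}, u ≤ v → J v ≤ J u := by
    intro u v huv
    exact (hJ v).2 (J u) (le_trans (hJ u).1 huv)
  -- key: every change point z satisfies s (J z) = z
  have key : ∀ z ∈ S, s (J z) = z ∧ J z ∈ Set.Icc (J y - k) (J y - 1) := by
    intro z hz
    obtain ⟨⟨hzy, hzL⟩, hchg⟩ := hz
    have hsz : s (J z) = z := by
      rcases lt_or_eq_of_le (hJ z).1 with h | h
      · exfalso
        obtain ⟨z', ⟨hz'1, hz'2⟩, hne⟩ := hchg (z - s (J z)) (by linarith)
        have h1 : s (J z) ≤ z' := by linarith [hz'1]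
        have h2 : J z' ≤ J z := (hJ z').2 (J z) h1
        have h3 : J z ≤ J z' := hmono (le_of_lt hz'2)
        exact hne (by rw [hf, hf, le_antisymm h2 h3])
      · exact h
    refine ⟨hsz, ?_, ?_⟩
    · -- J y ≤ J z + k
      have : s (J z + k) ≤ y := by
        rw [hs]; linarith
      have := (hJ y).2 _ this
      omega
    · -- J z < J y
      have h1 : J z ≤ J y := hmono (le_of_lt hzy)
      rcases lt_or_eq_of_le h1 with h | h
      · omega
      · exfalso
        have := (hJ y).1
        rw [← h, hsz] at this
        linarith
  have hsub : S ⊆ s '' ↑(Finset.Icc (J y - k) (J y - 1)) := by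
    intro z hz
    obtain ⟨h1, h2⟩ := key z hz
    exact ⟨J z, by simpa [Finset.mem_Icc] using h2, h1⟩
  have hfin : (s '' ↑(Finset.Icc (J y - (k : ℤ)) (J y - 1))).Finite :=
    (Finset.Icc (J y - (k : ℤ)) (J y - 1)).finite_toSet.image s
  calc Nat.card S = S.ncard := Nat.card_coe_set_eq S
    _ ≤ (s '' ↑(Finset.Icc (J y - (k : ℤ)) (J y - 1))).ncard :=
        Set.ncard_le_ncard hsub hfin
    _ ≤ (↑(Finset.Icc (J y - (k : ℤ)) (J y - 1)) : Set ℤ).ncard :=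
        Set.ncard_image_le (Finset.finite_toSet _)
    _ = (Finset.Icc (J y - (k : ℤ)) (J y - 1)).card := Set.ncard_coe_finset _
    _ ≤ k := by rw [Int.card_Icc]; omega
end
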